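/- arXiv:1001.3426 — 4 statements merged into one kernel-verified Lean document; each statement's English description precedes it below -/
import Mathlib

section
/- Let T > 0, let u : [0,T] × ℝ³ → ℝ³ and F : [0,T] × ℝ³ → M³ˣ³(ℝ) be twice continuously differentiable, and suppose that pointwise ∂_t F_{ij} + Σ_k u_k ∂_k F_{ij} = Σ_m (∂_m u_i) F_{mj} for all i,j. Define Q_{ijk} := Σ_l ( F_{lk} ∂_l F_{ij} − F_{lj} ∂_l F_{ik} ). Then pointwise on [0,T] × ℝ³, for all indices i,j,k: ∂_t Q_{ijk} + Σ_m u_m ∂_m Q_{ijk} = Σ_m (∂_m u_i) Q_{mjk}. -/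
/-- Spatial partial derivative `∂_i f` of a scalar field on `ℝ³`. -/
noncomputable def pd (i : Fin 3) (f : (Fin 3 → ℝ) → ℝ) (x : Fin 3 → ℝ) : ℝ :=
  fderiv ℝ f x (Pi.single i 1)

/-- The curl-type quantity `Q_{ijk} = Σ_l (F_{lk} ∂_l F_{ij} − F_{lj} ∂_l F_{ik})`. -/
noncomputable def Qc (F : ℝ → (Fin 3 → ℝ) → Fin 3 → Fin 3 → ℝ)
    (t : ℝ) (x : Fin 3 → ℝ) (i j k : Fin 3) : ℝ :=
  ∑ l, (F t x l k * pd l (fun y => F t y i j) x - F t x l j * pd l (fun y => F t y i k) x)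

namespace TC

open ContinuousLinearMap

abbrev E3 : Type := ℝ × (Fin 3 → ℝ)

noncomputable def ev (l : Fin 3) : E3 := (0, Pi.single l 1)
noncomputable def et : E3 := ((1:ℝ), 0)

/-- time-space component functions -/
noncomputable def fc (F : ℝ → (Fin 3 → ℝ) → Fin 3 → Fin 3 → ℝ) (a b : Fin 3) : E3 → ℝ :=
  fun p => F p.1 p.2 a b

noncomputable def uc (u : ℝ → (Fin 3 → ℝ) → Fin 3 → ℝ) (a : Fin 3) : E3 → ℝ :=
  fun p => u p.1 p.2 a

variable {G : E3 → ℝ} {t : ℝ} {x : Fin 3 → ℝ}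

lemma hasFDerivAt_slice_x (hG : DifferentiableAt ℝ G (t, x)) :
    HasFDerivAt (fun y => G (t, y)) ((fderiv ℝ G (t, x)).comp (inr ℝ ℝ (Fin 3 → ℝ))) x :=
  (hG.hasFDerivAt).comp x (hasFDerivAt_prodMk_right t x)

lemma pd_slice (hG : DifferentiableAt ℝ G (t, x)) (l : Fin 3) :
    pd l (fun y => G (t, y)) x = fderiv ℝ G (t, x) (ev l) := by
  rw [pd, (hasFDerivAt_slice_x hG).fderiv]
  simp [ev]

lemma hasDerivAt_slice_t (hG : DifferentiableAt ℝ G (t, x)) :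
    HasDerivAt (fun s => G (s, x)) (fderiv ℝ G (t, x) et) t := by
  have h := (hG.hasFDerivAt).comp t (hasFDerivAt_prodMk_left (𝕜 := ℝ) t x)
  have h2 := h.hasDerivAt
  simpa [et, Function.comp_def] using h2

lemma hasFDerivAt_fderiv_apply (hG : ContDiff ℝ 2 G) (p : E3) (v : E3) :
    HasFDerivAt (fun q => fderiv ℝ G q v)
      ((ContinuousLinearMap.apply ℝ ℝ v).comp (fderiv ℝ (fderiv ℝ G) p)) p := by
  have h1 : DifferentiableAt ℝ (fderiv ℝ G) p :=
    ((hG.fderiv_right (m := 1) (by norm_num)).differentiable one_ne_zero) p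
  exact (ContinuousLinearMap.apply ℝ ℝ v).hasFDerivAt.comp p h1.hasFDerivAt

lemma pd_fderiv_slice (hG : ContDiff ℝ 2 G) (t : ℝ) (x : Fin 3 → ℝ) (l : Fin 3) (v : E3) :
    pd l (fun y => fderiv ℝ G (t, y) v) x = fderiv ℝ (fderiv ℝ G) (t, x) (ev l) v := by
  have h : HasFDerivAt (fun y => fderiv ℝ G (t, y) v)
      (((ContinuousLinearMap.apply ℝ ℝ v).comp (fderiv ℝ (fderiv ℝ G) (t, x))).comp
        (inr ℝ ℝ (Fin 3 → ℝ))) x :=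
    (hasFDerivAt_fderiv_apply hG (t, x) v).comp x (hasFDerivAt_prodMk_right t x)
  rw [pd, h.fderiv]
  simp [ev]

lemma hasDerivAt_fderiv_slice_t (hG : ContDiff ℝ 2 G) (t : ℝ) (x : Fin 3 → ℝ) (v : E3) :
    HasDerivAt (fun s => fderiv ℝ G (s, x) v) (fderiv ℝ (fderiv ℝ G) (t, x) et v) t := by
  have h := (hasFDerivAt_fderiv_apply hG (t, x) v).comp t (hasFDerivAt_prodMk_left (𝕜 := ℝ) t x)
  have h2 := h.hasDerivAt
  simpa [et, Function.comp_def] using h2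

lemma diff_slice_x (hG : Differentiable ℝ G) (t : ℝ) :
    Differentiable ℝ (fun y => G (t, y)) := fun y =>
  (hasFDerivAt_slice_x (hG (t, y))).differentiableAt

lemma diff_fderiv_slice_x (hG : ContDiff ℝ 2 G) (t : ℝ) (v : E3) :
    Differentiable ℝ (fun y => fderiv ℝ G (t, y) v) := fun y =>
  ((hasFDerivAt_fderiv_apply hG (t, y) v).comp y (hasFDerivAt_prodMk_right t y)).differentiableAt

lemma pd_mul {f g : (Fin 3 → ℝ) → ℝ} (hf : DifferentiableAt ℝ f x) (hg : DifferentiableAt ℝ g x)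
    (m : Fin 3) :
    pd m (fun y => f y * g y) x = f x * pd m g x + g x * pd m f x := by
  simp [pd, fderiv_fun_mul hf hg]

lemma pd_add {f g : (Fin 3 → ℝ) → ℝ} (hf : DifferentiableAt ℝ f x) (hg : DifferentiableAt ℝ g x)
    (m : Fin 3) :
    pd m (fun y => f y + g y) x = pd m f x + pd m g x := by
  simp [pd, fderiv_fun_add hf hg]

lemma pd_sub {f g : (Fin 3 → ℝ) → ℝ} (hf : DifferentiableAt ℝ f x) (hg : DifferentiableAt ℝ g x)
    (m : Fin 3) :
    pd m (fun y => f y - g y) x = pd m f x - pd m g x := by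
  simp [pd, fderiv_fun_sub hf hg]

lemma pd_sum {f : Fin 3 → (Fin 3 → ℝ) → ℝ} (hf : ∀ a, DifferentiableAt ℝ (f a) x) (m : Fin 3) :
    pd m (fun y => ∑ a, f a y) x = ∑ a, pd m (f a) x := by
  rw [pd, fderiv_fun_sum fun a _ => hf a]
  simp [pd]

end TC

/- If `F` solves the transport equation `∂_t F + u·∇F = ∇u F`, then the quantity
`Q_{ijk} = Σ_l (F_{lk} ∂_l F_{ij} − F_{lj} ∂_l F_{ik})` satisfies
`∂_t Q_{ijk} + u·∇ Q_{ijk} = Σ_m (∂_m u_i) Q_{mjk}`. -/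
open TC in
set_option maxHeartbeats 4000000 in
/-- If `F` solves the transport equation `∂_t F + u·∇F = ∇u F`, then the quantity
`Q_{ijk} = Σ_l (F_{lk} ∂_l F_{ij} − F_{lj} ∂_l F_{ik})` satisfies
`∂_t Q_{ijk} + u·∇ Q_{ijk} = Σ_m (∂_m u_i) Q_{mjk}`. -/
theorem transport_equation_for_curl_quantity
    (T : ℝ) (hT : 0 < T)
    (u : ℝ → (Fin 3 → ℝ) → Fin 3 → ℝ)
    (F : ℝ → (Fin 3 → ℝ) → Fin 3 → Fin 3 → ℝ)
    (hu : ContDiff ℝ 2 (Function.uncurry u))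
    (hF : ContDiff ℝ 2 (Function.uncurry F))
    (heq : ∀ t ∈ Set.Icc (0 : ℝ) T, ∀ x : Fin 3 → ℝ, ∀ i j : Fin 3,
      deriv (fun s => F s x i j) t + ∑ k, u t x k * pd k (fun y => F t y i j) x
        = ∑ m, pd m (fun y => u t y i) x * F t x m j) :
    ∀ t ∈ Set.Icc (0 : ℝ) T, ∀ x : Fin 3 → ℝ, ∀ i j k : Fin 3,
      deriv (fun s => Qc F s x i j k) t + ∑ m, u t x m * pd m (fun y => Qc F t y i j k) x
        = ∑ m, pd m (fun y => u t y i) x * Qc F t x m j k := by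
  intro t ht x i j k
  -- component regularity
  have hfc2 : ∀ a b : Fin 3, ContDiff ℝ 2 (fc F a b) := fun a b =>
    contDiff_pi.1 (contDiff_pi.1 hF a) b
  have huc2 : ∀ a : Fin 3, ContDiff ℝ 2 (uc u a) := fun a => contDiff_pi.1 hu a
  have hfd : ∀ a b : Fin 3, Differentiable ℝ (fc F a b) := fun a b =>
    (hfc2 a b).differentiable two_ne_zero
  have hud : ∀ a : Fin 3, Differentiable ℝ (uc u a) := fun a =>
    (huc2 a).differentiable two_ne_zero
  -- conversion of pd and deriv into fderiv of component functions
  have e1 : ∀ (s : ℝ) (y : Fin 3 → ℝ) (a b l : Fin 3),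
      pd l (fun z => F s z a b) y = fderiv ℝ (fc F a b) (s, y) (ev l) :=
    fun s y a b l => pd_slice (hfd a b (s, y)) l
  have e3 : ∀ (y : Fin 3 → ℝ) (a l : Fin 3),
      pd l (fun z => u t z a) y = fderiv ℝ (uc u a) (t, y) (ev l) :=
    fun y a l => pd_slice (hud a (t, y)) l
  have e2 : ∀ (y : Fin 3 → ℝ) (a b : Fin 3),
      deriv (fun s => F s y a b) t = fderiv ℝ (fc F a b) (t, y) et :=
    fun y a b => (hasDerivAt_slice_t (hfd a b (t, y))).deriv
  -- scalar form of the transport equation (at time t, all positions)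
  have T1 : ∀ (y : Fin 3 → ℝ) (a b : Fin 3),
      fderiv ℝ (fc F a b) (t, y) et
        + ∑ m, uc u m (t, y) * fderiv ℝ (fc F a b) (t, y) (ev m)
      = ∑ m, fderiv ℝ (uc u a) (t, y) (ev m) * fc F m b (t, y) := by
    intro y a b
    have h := heq t ht y a b
    rw [e2 y a b] at h
    simp only [e1, e3] at h
    exact h
  -- differentiability of slices
  have dF : ∀ a b : Fin 3, Differentiable ℝ (fun y => fc F a b (t, y)) := fun a b =>
    diff_slice_x (hfd a b) t
  have dU : ∀ a : Fin 3, Differentiable ℝ (fun y => uc u a (t, y)) := fun a =>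
    diff_slice_x (hud a) t
  have dFf : ∀ (a b : Fin 3) (v : E3), Differentiable ℝ (fun y => fderiv ℝ (fc F a b) (t, y) v) :=
    fun a b v => diff_fderiv_slice_x (hfc2 a b) t v
  have dUf : ∀ (a : Fin 3) (v : E3), Differentiable ℝ (fun y => fderiv ℝ (uc u a) (t, y) v) :=
    fun a v => diff_fderiv_slice_x (huc2 a) t v
  -- spatial derivative of the transport equation
  have S1 : ∀ (a b l : Fin 3),
      fderiv ℝ (fderiv ℝ (fc F a b)) (t, x) (ev l) et
        + ∑ m, (uc u m (t, x) * fderiv ℝ (fderiv ℝ (fc F a b)) (t, x) (ev l) (ev m)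
            + fderiv ℝ (fc F a b) (t, x) (ev m) * fderiv ℝ (uc u m) (t, x) (ev l))
      = ∑ m, (fderiv ℝ (uc u a) (t, x) (ev m) * fderiv ℝ (fc F m b) (t, x) (ev l)
            + fc F m b (t, x) * fderiv ℝ (fderiv ℝ (uc u a)) (t, x) (ev l) (ev m)) := by
    intro a b l
    have hfun : (fun y => fderiv ℝ (fc F a b) (t, y) et
          + ∑ m, uc u m (t, y) * fderiv ℝ (fc F a b) (t, y) (ev m))
        = (fun y => ∑ m, fderiv ℝ (uc u a) (t, y) (ev m) * fc F m b (t, y)) :=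
      funext fun y => T1 y a b
    have hpd := congrArg (fun f => pd l f x) hfun
    try simp only at hpd
    rw [pd_add ((dFf a b et) x) (DifferentiableAt.fun_sum fun m _ =>
          ((dU m x).fun_mul ((dFf a b (ev m)) x))),
        pd_fderiv_slice (hfc2 a b) t x l et,
        pd_sum (fun m => (dU m x).fun_mul ((dFf a b (ev m)) x)),
        pd_sum (fun m => ((dUf a (ev m)) x).fun_mul ((dF m b) x))] at hpd
    calc fderiv ℝ (fderiv ℝ (fc F a b)) (t, x) (ev l) et
          + ∑ m, (uc u m (t, x) * fderiv ℝ (fderiv ℝ (fc F a b)) (t, x) (ev l) (ev m)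
              + fderiv ℝ (fc F a b) (t, x) (ev m) * fderiv ℝ (uc u m) (t, x) (ev l))
        = fderiv ℝ (fderiv ℝ (fc F a b)) (t, x) (ev l) et
          + ∑ m, pd l (fun y => uc u m (t, y) * fderiv ℝ (fc F a b) (t, y) (ev m)) x := by
          congr 1
          refine Finset.sum_congr rfl fun m _ => ?_
          rw [pd_mul (dU m x) ((dFf a b (ev m)) x), pd_slice (hud m (t, x)),
            pd_fderiv_slice (hfc2 a b) t x l (ev m)]
      _ = ∑ m, pd l (fun y => fderiv ℝ (uc u a) (t, y) (ev m) * fc F m b (t, y)) x := hpd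
      _ = ∑ m, (fderiv ℝ (uc u a) (t, x) (ev m) * fderiv ℝ (fc F m b) (t, x) (ev l)
            + fc F m b (t, x) * fderiv ℝ (fderiv ℝ (uc u a)) (t, x) (ev l) (ev m)) := by
          refine Finset.sum_congr rfl fun m _ => ?_
          rw [pd_mul ((dUf a (ev m)) x) ((dF m b) x), pd_slice (hfd m b (t, x)),
            pd_fderiv_slice (huc2 a) t x l (ev m)]
  -- symmetry of second derivatives
  have symF : ∀ (a b : Fin 3) (v w : E3),
      fderiv ℝ (fderiv ℝ (fc F a b)) (t, x) v w = fderiv ℝ (fderiv ℝ (fc F a b)) (t, x) w v :=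
    fun a b => (hfc2 a b).contDiffAt.isSymmSndFDerivAt (by simp)
  have symU : ∀ (a : Fin 3) (v w : E3),
      fderiv ℝ (fderiv ℝ (uc u a)) (t, x) v w = fderiv ℝ (fderiv ℝ (uc u a)) (t, x) w v :=
    fun a => (huc2 a).contDiffAt.isSymmSndFDerivAt (by simp)
  -- time derivative of Q
  have hder : deriv (fun s => Qc F s x i j k) t
      = ∑ l, (fderiv ℝ (fc F l k) (t, x) et * fderiv ℝ (fc F i j) (t, x) (ev l)
            + fc F l k (t, x) * fderiv ℝ (fderiv ℝ (fc F i j)) (t, x) et (ev l)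
          - (fderiv ℝ (fc F l j) (t, x) et * fderiv ℝ (fc F i k) (t, x) (ev l)
            + fc F l j (t, x) * fderiv ℝ (fderiv ℝ (fc F i k)) (t, x) et (ev l))) := by
    have hQfun : (fun s => Qc F s x i j k)
        = (fun s => ∑ l, (fc F l k (s, x) * fderiv ℝ (fc F i j) (s, x) (ev l)
            - fc F l j (s, x) * fderiv ℝ (fc F i k) (s, x) (ev l))) := by
      funext s
      simp only [Qc]
      refine Finset.sum_congr rfl fun l _ => ?_
      rw [e1 s x i j l, e1 s x i k l]
      rfl
    rw [hQfun]
    refine HasDerivAt.deriv ?_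
    refine HasDerivAt.fun_sum fun l _ => ?_
    exact ((hasDerivAt_slice_t (hfd l k (t, x))).mul
        (hasDerivAt_fderiv_slice_t (hfc2 i j) t x (ev l))).sub
      ((hasDerivAt_slice_t (hfd l j (t, x))).mul
        (hasDerivAt_fderiv_slice_t (hfc2 i k) t x (ev l)))
  -- spatial derivatives of Q
  have hQxfun : (fun y => Qc F t y i j k)
      = (fun y => ∑ l, (fc F l k (t, y) * fderiv ℝ (fc F i j) (t, y) (ev l)
          - fc F l j (t, y) * fderiv ℝ (fc F i k) (t, y) (ev l))) := by
    funext y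
    simp only [Qc]
    refine Finset.sum_congr rfl fun l _ => ?_
    rw [e1 t y i j l, e1 t y i k l]
    rfl
  have hQpd : ∀ m : Fin 3, pd m (fun y => Qc F t y i j k) x
      = ∑ l, ((fc F l k (t, x) * fderiv ℝ (fderiv ℝ (fc F i j)) (t, x) (ev m) (ev l)
            + fderiv ℝ (fc F i j) (t, x) (ev l) * fderiv ℝ (fc F l k) (t, x) (ev m))
          - (fc F l j (t, x) * fderiv ℝ (fderiv ℝ (fc F i k)) (t, x) (ev m) (ev l)
            + fderiv ℝ (fc F i k) (t, x) (ev l) * fderiv ℝ (fc F l j) (t, x) (ev m))) := by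
    intro m
    rw [hQxfun]
    rw [pd_sum (fun l => ((dF l k x).fun_mul ((dFf i j (ev l)) x)).fun_sub
        ((dF l j x).fun_mul ((dFf i k (ev l)) x))) m]
    refine Finset.sum_congr rfl fun l _ => ?_
    rw [pd_sub ((dF l k x).fun_mul ((dFf i j (ev l)) x)) ((dF l j x).fun_mul ((dFf i k (ev l)) x)),
        pd_mul (dF l k x) ((dFf i j (ev l)) x), pd_mul (dF l j x) ((dFf i k (ev l)) x),
        pd_slice (hfd l k (t, x)), pd_slice (hfd l j (t, x)),
        pd_fderiv_slice (hfc2 i j) t x m (ev l), pd_fderiv_slice (hfc2 i k) t x m (ev l)]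
  -- values
  have vF : ∀ a b : Fin 3, fc F a b (t, x) = F t x a b := fun _ _ => rfl
  have vU : ∀ a : Fin 3, uc u a (t, x) = u t x a := fun _ => rfl
  -- instantiated hypotheses
  have t10k := T1 x 0 k
  have t11k := T1 x 1 k
  have t12k := T1 x 2 k
  have t10j := T1 x 0 j
  have t11j := T1 x 1 j
  have t12j := T1 x 2 j
  have s1ij0 := S1 i j 0
  have s1ij1 := S1 i j 1
  have s1ij2 := S1 i j 2
  have s1ik0 := S1 i k 0
  have s1ik1 := S1 i k 1
  have s1ik2 := S1 i k 2
  rw [hder]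
  simp only [hQpd]
  simp only [Qc]
  simp only [e1, e3]
  simp only [Fin.sum_univ_three, vF, vU] at t10k t11k t12k t10j t11j t12j s1ij0 s1ij1 s1ij2 s1ik0 s1ik1 s1ik2 ⊢
  simp only [symF i j et, symF i k et, symF i j (ev 1) (ev 0), symF i j (ev 2) (ev 0),
    symF i j (ev 2) (ev 1), symF i k (ev 1) (ev 0), symF i k (ev 2) (ev 0),
    symF i k (ev 2) (ev 1), symU i (ev 1) (ev 0), symU i (ev 2) (ev 0),
    symU i (ev 2) (ev 1)] at t10k t11k t12k t10j t11j t12j s1ij0 s1ij1 s1ij2 s1ik0 s1ik1 s1ik2 ⊢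
  linear_combination
      fderiv ℝ (fc F i j) (t, x) (ev 0) * t10k
    + fderiv ℝ (fc F i j) (t, x) (ev 1) * t11k
    + fderiv ℝ (fc F i j) (t, x) (ev 2) * t12k
    - fderiv ℝ (fc F i k) (t, x) (ev 0) * t10j
    - fderiv ℝ (fc F i k) (t, x) (ev 1) * t11j
    - fderiv ℝ (fc F i k) (t, x) (ev 2) * t12j
    + F t x 0 k * s1ij0 + F t x 1 k * s1ij1 + F t x 2 k * s1ij2
    - F t x 0 j * s1ik0 - F t x 1 j * s1ik1 - F t x 2 j * s1ik2
end

section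
/- Let T > 0, let u : [0,T] × ℝ³ → ℝ³ be twice continuously differentiable with u and its first spatial derivatives bounded on [0,T] × ℝ³, and let F : [0,T] × ℝ³ → M³ˣ³(ℝ) be twice continuously differentiable and satisfy ∂_t F + u·∇F = ∇u F pointwise. If at t = 0 the identity Σ_l F_{lk} ∂_l F_{ij} = Σ_l F_{lj} ∂_l F_{ik} holds for all i,j,k and all x ∈ ℝ³, then this identity holds for all t ∈ [0,T], all i,j,k and all x ∈ ℝ³. -/
open Set Function

noncomputable section CurlAux

abbrev V3 := Fin 3 → ℝ
abbrev P3 := ℝ × V3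

def eL (l : Fin 3) : P3 := (0, Pi.single l 1)
def eT : P3 := (1, 0)

lemma hasDerivAt_line {G : Type*} [NormedAddCommGroup G] [NormedSpace ℝ G]
    {f : P3 → G} {f' : P3 →L[ℝ] G} {p v : P3} (h : HasFDerivAt f f' p) :
    HasDerivAt (fun s : ℝ => f (p + s • v)) (f' v) 0 := by
  have hc : HasDerivAt (fun s : ℝ => p + s • v) v 0 := by
    simpa using ((hasDerivAt_id (0:ℝ)).smul_const v).const_add p
  have hp : p + (0:ℝ) • v = p := by simp
  have h' : HasFDerivAt f f' ((fun s : ℝ => p + s • v) 0) := by simpa [hp] using h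
  exact h'.comp_hasDerivAt 0 hc

lemma pd_slice_eq {f : P3 → ℝ} {f' : P3 →L[ℝ] ℝ} {t : ℝ} {x : V3}
    (h : HasFDerivAt f f' (t, x)) (l : Fin 3) :
    pd l (fun y => f (t, y)) x = f' (eL l) := by
  have hins : HasFDerivAt (fun y : V3 => (t, y))
      (ContinuousLinearMap.inr ℝ ℝ V3) x := hasFDerivAt_prodMk_right t x
  have hcomp : HasFDerivAt (fun y : V3 => f (t, y))
      (f'.comp (ContinuousLinearMap.inr ℝ ℝ V3)) x := h.comp x hins
  rw [pd, hcomp.fderiv]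
  rfl

lemma deriv_slice_eq {f : P3 → ℝ} {f' : P3 →L[ℝ] ℝ} {t : ℝ} {x : V3}
    (h : HasFDerivAt f f' (t, x)) :
    deriv (fun s => f (s, x)) t = f' eT := by
  have hins : HasDerivAt (fun s : ℝ => (s, x)) ((1 : ℝ), (0 : V3)) t := by
    simpa using (hasDerivAt_id t).prodMk (hasDerivAt_const t x)
  exact (h.comp_hasDerivAt t hins).deriv

end CurlAux


set_option maxHeartbeats 1000000 in
/-- **Lemma 2.1.** Propagation of the curl-type compatibility identity: if `u` is a `C²`
velocity field, bounded together with its first spatial derivatives on `[0,T] × ℝ³`, and the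
`C²` field `F` solves `∂_t F + u·∇F = ∇u F`, then the identity
`Σ_l F_{lk} ∂_l F_{ij} = Σ_l F_{lj} ∂_l F_{ik}`, once valid at `t = 0`, holds for all
`t ∈ [0,T]`. -/
theorem curl_identity_propagates
    (T : ℝ) (hT : 0 < T)
    (u : ℝ → (Fin 3 → ℝ) → Fin 3 → ℝ)
    (F : ℝ → (Fin 3 → ℝ) → Fin 3 → Fin 3 → ℝ)
    (hu : ContDiff ℝ 2 (Function.uncurry u))
    (hF : ContDiff ℝ 2 (Function.uncurry F))
    (hubd : ∃ C : ℝ, ∀ t ∈ Set.Icc (0 : ℝ) T, ∀ x : Fin 3 → ℝ, ∀ i j : Fin 3,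
      |u t x i| ≤ C ∧ |pd j (fun y => u t y i) x| ≤ C)
    (heq : ∀ t ∈ Set.Icc (0 : ℝ) T, ∀ x : Fin 3 → ℝ, ∀ i j : Fin 3,
      deriv (fun s => F s x i j) t + ∑ k, u t x k * pd k (fun y => F t y i j) x
        = ∑ m, pd m (fun y => u t y i) x * F t x m j)
    (h0 : ∀ x : Fin 3 → ℝ, ∀ i j k : Fin 3,
      ∑ l, F 0 x l k * pd l (fun y => F 0 y i j) x
        = ∑ l, F 0 x l j * pd l (fun y => F 0 y i k) x) :
    ∀ t ∈ Set.Icc (0 : ℝ) T, ∀ x : Fin 3 → ℝ, ∀ i j k : Fin 3,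
      ∑ l, F t x l k * pd l (fun y => F t y i j) x
        = ∑ l, F t x l j * pd l (fun y => F t y i k) x := by
  classical
  obtain ⟨C0, hC0⟩ := hubd
  set φ : Fin 3 → Fin 3 → P3 → ℝ := fun i j p => F p.1 p.2 i j with hφdef
  set ψ : Fin 3 → P3 → ℝ := fun i p => u p.1 p.2 i with hψdef
  have hφC : ∀ i j, ContDiff ℝ 2 (φ i j) := fun i j =>
    (contDiff_pi.mp ((contDiff_pi.mp hF) i)) j
  have hψC : ∀ i, ContDiff ℝ 2 (ψ i) := fun i => (contDiff_pi.mp hu) i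
  set Dφ : Fin 3 → Fin 3 → P3 → P3 →L[ℝ] ℝ := fun i j => fderiv ℝ (φ i j) with hDφdef
  set Dψ : Fin 3 → P3 → P3 →L[ℝ] ℝ := fun i => fderiv ℝ (ψ i) with hDψdef
  set D2φ : Fin 3 → Fin 3 → P3 → P3 →L[ℝ] P3 →L[ℝ] ℝ := fun i j => fderiv ℝ (Dφ i j) with hD2φdef
  set D2ψ : Fin 3 → P3 → P3 →L[ℝ] P3 →L[ℝ] ℝ := fun i => fderiv ℝ (Dψ i) with hD2ψdef
  have hφd : ∀ i j p, HasFDerivAt (φ i j) (Dφ i j p) p := fun i j p =>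
    ((hφC i j).differentiable (by norm_num)).differentiableAt.hasFDerivAt
  have hψd : ∀ i p, HasFDerivAt (ψ i) (Dψ i p) p := fun i p =>
    ((hψC i).differentiable (by norm_num)).differentiableAt.hasFDerivAt
  have hφC1 : ∀ i j, ContDiff ℝ 1 (Dφ i j) := fun i j => (hφC i j).fderiv_right (by norm_num)
  have hψC1 : ∀ i, ContDiff ℝ 1 (Dψ i) := fun i => (hψC i).fderiv_right (by norm_num)
  have hφd2 : ∀ i j p, HasFDerivAt (Dφ i j) (D2φ i j p) p := fun i j p =>
    ((hφC1 i j).differentiable one_ne_zero).differentiableAt.hasFDerivAt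
  have hψd2 : ∀ i p, HasFDerivAt (Dψ i) (D2ψ i p) p := fun i p =>
    ((hψC1 i).differentiable one_ne_zero).differentiableAt.hasFDerivAt
  have symmφ : ∀ i j p v w, D2φ i j p v w = D2φ i j p w v := fun i j p v w =>
    second_derivative_symmetric (hφd i j) (hφd2 i j p) v w
  have symmψ : ∀ i p v w, D2ψ i p v w = D2ψ i p w v := fun i p v w =>
    second_derivative_symmetric (hψd i) (hψd2 i p) v w
  have pdF : ∀ (t : ℝ) (x : V3) (i j l : Fin 3),
      pd l (fun y => F t y i j) x = Dφ i j (t, x) (eL l) := fun t x i j l =>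
    pd_slice_eq (hφd i j (t, x)) l
  have pdu : ∀ (t : ℝ) (x : V3) (i l : Fin 3),
      pd l (fun y => u t y i) x = Dψ i (t, x) (eL l) := fun t x i l =>
    pd_slice_eq (hψd i (t, x)) l
  have derF : ∀ (t : ℝ) (x : V3) (i j : Fin 3),
      deriv (fun s => F s x i j) t = Dφ i j (t, x) eT := fun t x i j =>
    deriv_slice_eq (hφd i j (t, x))
  -- the PDE, restated
  have C1 : ∀ (i j : Fin 3), ∀ t ∈ Set.Icc (0:ℝ) T, ∀ x : V3,
      Dφ i j (t, x) eT = (∑ m, Dψ i (t, x) (eL m) * φ m j (t, x))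
        - ∑ m, ψ m (t, x) * Dφ i j (t, x) (eL m) := by
    intro i j t ht x
    have h := heq t ht x i j
    rw [derF] at h
    simp only [pdF, pdu] at h
    have : (∑ k, u t x k * Dφ i j (t, x) (eL k)) = ∑ m, ψ m (t, x) * Dφ i j (t, x) (eL m) := rfl
    rw [this] at h
    have h2 : (∑ m, Dψ i (t, x) (eL m) * F t x m j)
        = ∑ m, Dψ i (t, x) (eL m) * φ m j (t, x) := rfl
    rw [h2] at h
    linarith
  -- directional derivative helpers at a point p
  have hq0 : ∀ (p v : P3), p + (0:ℝ) • v = p := fun p v => by simp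
  have hA : ∀ (i j : Fin 3) (p v : P3),
      HasDerivAt (fun s : ℝ => φ i j (p + s • v)) (Dφ i j p v) 0 := fun i j p v =>
    hasDerivAt_line (hφd i j p)
  have hC : ∀ (i : Fin 3) (p v : P3),
      HasDerivAt (fun s : ℝ => ψ i (p + s • v)) (Dψ i p v) 0 := fun i p v =>
    hasDerivAt_line (hψd i p)
  have hB : ∀ (i j : Fin 3) (p v w : P3),
      HasDerivAt (fun s : ℝ => Dφ i j (p + s • v) w) (D2φ i j p v w) 0 := by
    intro i j p v w
    have h' := (hasDerivAt_line (f := Dφ i j) (v := v) (hφd2 i j p)).clm_apply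
      (hasDerivAt_const (0:ℝ) w)
    simpa using h'
  have hD : ∀ (i : Fin 3) (p v w : P3),
      HasDerivAt (fun s : ℝ => Dψ i (p + s • v) w) (D2ψ i p v w) 0 := by
    intro i p v w
    have h' := (hasDerivAt_line (f := Dψ i) (v := v) (hψd2 i p)).clm_apply
      (hasDerivAt_const (0:ℝ) w)
    simpa using h'
  -- spatial derivative of the PDE
  have C2 : ∀ (i j l : Fin 3), ∀ t ∈ Set.Icc (0:ℝ) T, ∀ x : V3,
      D2φ i j (t, x) (eL l) eT
        = (∑ m, (D2ψ i (t, x) (eL l) (eL m) * φ m j (t, x)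
              + Dψ i (t, x) (eL m) * Dφ m j (t, x) (eL l)))
          - ∑ m, (Dψ m (t, x) (eL l) * Dφ i j (t, x) (eL m)
              + ψ m (t, x) * D2φ i j (t, x) (eL l) (eL m)) := by
    intro i j l t ht x
    set p : P3 := (t, x) with hpdef
    have h1 : HasDerivAt (fun s : ℝ => Dφ i j (p + s • eL l) eT)
        (D2φ i j p (eL l) eT) 0 := hB i j p (eL l) eT
    have h2 : HasDerivAt (fun s : ℝ =>
        (∑ m, Dψ i (p + s • eL l) (eL m) * φ m j (p + s • eL l))
          - ∑ m, ψ m (p + s • eL l) * Dφ i j (p + s • eL l) (eL m))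
        ((∑ m, (D2ψ i p (eL l) (eL m) * φ m j p + Dψ i p (eL m) * Dφ m j p (eL l)))
          - ∑ m, (Dψ m p (eL l) * Dφ i j p (eL m) + ψ m p * D2φ i j p (eL l) (eL m))) 0 := by
      apply HasDerivAt.sub
      · apply HasDerivAt.fun_sum
        intro m _
        have := (hD i p (eL l) (eL m)).fun_mul (hA m j p (eL l))
        simpa [hq0] using this
      · apply HasDerivAt.fun_sum
        intro m _
        have := (hC m p (eL l)).fun_mul (hB i j p (eL l) (eL m))
        simpa [hq0] using this
    have C1' : ∀ (a b : Fin 3) (q : P3), q.1 ∈ Set.Icc (0:ℝ) T →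
        Dφ a b q eT = (∑ m, Dψ a q (eL m) * φ m b q) - ∑ m, ψ m q * Dφ a b q (eL m) := by
      intro a b q hq
      exact C1 a b q.1 hq q.2
    have hfun : (fun s : ℝ => Dφ i j (p + s • eL l) eT)
        = (fun s : ℝ =>
        (∑ m, Dψ i (p + s • eL l) (eL m) * φ m j (p + s • eL l))
          - ∑ m, ψ m (p + s • eL l) * Dφ i j (p + s • eL l) (eL m)) := by
      funext s
      refine C1' i j (p + s • eL l) ?_
      have hfst : (p + s • eL l).1 = t := by
        show t + s • (0:ℝ) = t
        simp
      rw [hfst]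
      exact ht
    rw [hfun] at h1
    exact h1.unique h2
  have expandP : ∀ (t : ℝ) (x : V3) (g : P3 →L[ℝ] ℝ),
      g ((1 : ℝ), u t x) = g eT + ∑ m, u t x m * g (eL m) := by
    intro t x g
    have hdecomp : ((1 : ℝ), u t x) = eT + ∑ m, u t x m • eL m := by
      have h1 : (∑ m, u t x m • eL m).1 = 0 := by
        rw [Prod.fst_sum]
        simp [eL]
      have h2 : (∑ m, u t x m • eL m).2 = u t x := by
        rw [Prod.snd_sum]
        funext r
        rw [Finset.sum_apply]
        simp [eL, Pi.single_apply]
      refine Prod.ext ?_ ?_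
      · rw [Prod.fst_add, h1]
        simp [eT]
      · rw [Prod.snd_add, h2]
        simp [eT]
    rw [hdecomp, map_add, map_sum]
    simp [smul_eq_mul]
  -- the key second-derivative identity in the transport direction
  have C3 : ∀ (i j l : Fin 3), ∀ t ∈ Set.Icc (0:ℝ) T, ∀ x : V3,
      D2φ i j (t, x) ((1 : ℝ), u t x) (eL l)
        = (∑ m, (D2ψ i (t, x) (eL l) (eL m) * φ m j (t, x)
              + Dψ i (t, x) (eL m) * Dφ m j (t, x) (eL l)))
          - ∑ m, Dψ m (t, x) (eL l) * Dφ i j (t, x) (eL m) := by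
    intro i j l t ht x
    have hflip := expandP t x ((D2φ i j (t, x)).flip (eL l))
    simp only [ContinuousLinearMap.flip_apply] at hflip
    rw [hflip, symmφ i j (t, x) eT (eL l), C2 i j l t ht x]
    have hsw : (∑ m, u t x m * D2φ i j (t, x) (eL m) (eL l))
        = ∑ m, ψ m (t, x) * D2φ i j (t, x) (eL l) (eL m) := by
      refine Finset.sum_congr rfl fun m _ => ?_
      rw [symmφ i j (t, x) (eL m) (eL l)]
    rw [hsw]
    simp only [Finset.sum_add_distrib]
    ring
  -- transport derivative of φ along the flow direction
  have S1 : ∀ (l k : Fin 3), ∀ t ∈ Set.Icc (0:ℝ) T, ∀ x : V3,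
      Dφ l k (t, x) ((1 : ℝ), u t x) = ∑ m, Dψ l (t, x) (eL m) * φ m k (t, x) := by
    intro l k t ht x
    rw [expandP t x (Dφ l k (t, x)), C1 l k t ht x]
    have : (∑ m, u t x m * Dφ l k (t, x) (eL m))
        = ∑ m, ψ m (t, x) * Dφ l k (t, x) (eL m) := rfl
    rw [this]
    ring
  -- the key pointwise algebraic identity for the derivative of a along the flow
  have halg : ∀ t ∈ Set.Icc (0:ℝ) T, ∀ (x : V3) (i j k : Fin 3),
      ((∑ l, (Dφ l k (t, x) ((1:ℝ), u t x) * Dφ i j (t, x) (eL l)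
          + φ l k (t, x) * D2φ i j (t, x) ((1:ℝ), u t x) (eL l)))
        - ∑ l, (Dφ l j (t, x) ((1:ℝ), u t x) * Dφ i k (t, x) (eL l)
          + φ l j (t, x) * D2φ i k (t, x) ((1:ℝ), u t x) (eL l)))
      = ∑ m, Dψ i (t, x) (eL m) *
          ((∑ l, φ l k (t, x) * Dφ m j (t, x) (eL l))
            - ∑ l, φ l j (t, x) * Dφ m k (t, x) (eL l)) := by
    intro t ht x i j k
    have e1 : ∀ b c : Fin 3, Dφ b c (t, x) ((1:ℝ), u t x)
        = ∑ m, Dψ b (t, x) (eL m) * φ m c (t, x) := fun b c => S1 b c t ht x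
    have e2 : ∀ (b c l' : Fin 3), D2φ b c (t, x) ((1:ℝ), u t x) (eL l')
        = (∑ m, (D2ψ b (t, x) (eL l') (eL m) * φ m c (t, x)
              + Dψ b (t, x) (eL m) * Dφ m c (t, x) (eL l')))
          - ∑ m, Dψ m (t, x) (eL l') * Dφ b c (t, x) (eL m) := fun b c l' => C3 b c l' t ht x
    simp only [e1, e2]
    simp only [Fin.sum_univ_three]
    rw [symmψ i (t, x) (eL 1) (eL 0), symmψ i (t, x) (eL 2) (eL 0),
      symmψ i (t, x) (eL 2) (eL 1)]
    ring
  -- bounds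
  set CB : ℝ := max C0 0 with hCBdef
  have hCB0 : 0 ≤ CB := le_max_right _ _
  have hubd1 : ∀ t ∈ Set.Icc (0:ℝ) T, ∀ (x : V3) (i : Fin 3), |u t x i| ≤ CB :=
    fun t ht x i => le_trans (hC0 t ht x i 0).1 (le_max_left _ _)
  have hubd2 : ∀ t ∈ Set.Icc (0:ℝ) T, ∀ (x : V3) (i m : Fin 3),
      |Dψ i (t, x) (eL m)| ≤ CB := by
    intro t ht x i m
    rw [← pdu]
    exact le_trans (hC0 t ht x i m).2 (le_max_left _ _)
  -- now the main argument
  intro t0 ht0 x0 i0 j0 k0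
  -- Lipschitz bound for u t
  have hulip : ∀ t ∈ Set.Icc (0:ℝ) T, LipschitzWith (Real.toNNReal (3 * CB)) (u t) := by
    intro t ht
    have hus : ContDiff ℝ 2 (fun y : V3 => u t y) :=
      hu.comp ((contDiff_const (c := t)).prodMk contDiff_id)
    refine lipschitzWith_of_nnnorm_fderiv_le (hus.differentiable (by norm_num)) fun x => ?_
    have hb : ‖fderiv ℝ (fun y : V3 => u t y) x‖ ≤ 3 * CB := by
      refine ContinuousLinearMap.opNorm_le_bound _ (by positivity) fun h => ?_
      refine pi_norm_le_iff_of_nonneg (by positivity) |>.2 fun i => ?_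
      have hD : DifferentiableAt ℝ (fun y : V3 => u t y) x :=
        (hus.differentiable (by norm_num)).differentiableAt
      have h1 : HasFDerivAt (fun y : V3 => u t y i)
          ((ContinuousLinearMap.proj (R := ℝ) (φ := fun _ : Fin 3 => ℝ) i).comp
            (fderiv ℝ (fun y : V3 => u t y) x)) x :=
        by
          have hcomp := (ContinuousLinearMap.proj (R := ℝ) (φ := fun _ : Fin 3 => ℝ)
            i).hasFDerivAt.comp x hD.hasFDerivAt
          exact hcomp
      have hdi : (fderiv ℝ (fun y : V3 => u t y) x h) i
          = fderiv ℝ (fun y : V3 => u t y i) x h := by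
        rw [h1.fderiv]
        rfl
      rw [Real.norm_eq_abs, hdi]
      have hexp : h = ∑ jj : Fin 3, h jj • (Pi.single jj 1 : V3) := by
        funext r
        rw [Finset.sum_apply]
        simp [Pi.single_apply]
      calc |fderiv ℝ (fun y : V3 => u t y i) x h|
          = |∑ jj : Fin 3, h jj * fderiv ℝ (fun y : V3 => u t y i) x (Pi.single jj 1)| := by
            congr 1
            conv_lhs => rw [hexp]
            rw [map_sum]
            simp [smul_eq_mul]
        _ ≤ ∑ jj : Fin 3, |h jj * fderiv ℝ (fun y : V3 => u t y i) x (Pi.single jj 1)| :=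
            Finset.abs_sum_le_sum_abs _ _
        _ ≤ ∑ _jj : Fin 3, ‖h‖ * CB := by
            refine Finset.sum_le_sum fun jj _ => ?_
            rw [abs_mul]
            have hpd : |fderiv ℝ (fun y : V3 => u t y i) x (Pi.single jj 1)| ≤ CB := by
              have h2 := (hC0 t ht x i jj).2
              rw [pd] at h2
              exact le_trans h2 (le_max_left _ _)
            have hh : |h jj| ≤ ‖h‖ := by
              rw [← Real.norm_eq_abs]
              exact norm_le_pi_norm h jj
            exact mul_le_mul hh hpd (abs_nonneg _) (norm_nonneg _)
        _ = 3 * CB * ‖h‖ := by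
            rw [Finset.sum_const]
            simp
            ring
    rw [← NNReal.coe_le_coe, coe_nnnorm, Real.coe_toNNReal _ (by positivity)]
    exact hb
  -- Picard-Lindelöf
  have hpl : IsPicardLindelof (fun t x => u t x) (tmin := 0) (tmax := T) ⟨t0, ht0⟩ x0
      (Real.toNNReal (CB * T + 1)) 0 (Real.toNNReal CB) (Real.toNNReal (3 * CB)) := by
    refine ⟨fun t htt => (hulip t htt).lipschitzOnWith,
      fun x _ => ?_, fun t htt x _ => ?_, ?_⟩
    · exact (hu.continuous.comp (continuous_id.prodMk continuous_const)).continuousOn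
    · rw [Real.coe_toNNReal _ hCB0]
      refine pi_norm_le_iff_of_nonneg hCB0 |>.2 fun i => ?_
      rw [Real.norm_eq_abs]
      exact hubd1 t htt x i
    · have hmax : max (T - t0) (t0 - 0) ≤ T := by
        rcases ht0 with ⟨h1, h2⟩
        apply max_le <;> linarith
      simp only [Real.coe_toNNReal _ hCB0, NNReal.coe_zero, sub_zero]
      rw [Real.coe_toNNReal _ (by positivity)]
      calc CB * max (T - t0) t0 ≤ CB * T :=
            mul_le_mul_of_nonneg_left (by simpa using hmax) hCB0
        _ ≤ CB * T + 1 := by linarith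
  obtain ⟨X, hX0, hX⟩ := hpl.exists_eq_forall_mem_Icc_hasDerivWithinAt₀
  replace hX0 : X t0 = x0 := hX0
  have hXc : ContinuousOn X (Set.Icc 0 T) := fun r hr => (hX r hr).continuousWithinAt
  set γ : ℝ → P3 := fun s => (s, X s) with hγdef
  have hγc : ContinuousOn γ (Set.Icc 0 T) := (continuous_id.continuousOn).prodMk hXc
  set a : ℝ → Fin 3 → Fin 3 → Fin 3 → ℝ := fun s i j k =>
    (∑ l, φ l k (γ s) * Dφ i j (γ s) (eL l))
      - ∑ l, φ l j (γ s) * Dφ i k (γ s) (eL l) with hadef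
  -- continuity of a
  have hac : ContinuousOn a (Set.Icc (0:ℝ) T) := by
    have hDφcont : ∀ (i j l : Fin 3), Continuous fun q : P3 => Dφ i j q (eL l) := fun i j l =>
      (ContinuousLinearMap.apply ℝ ℝ (eL l)).continuous.comp (hφC1 i j).continuous
    refine continuousOn_pi.2 fun i => continuousOn_pi.2 fun j => continuousOn_pi.2 fun k => ?_
    refine ContinuousOn.sub ?_ ?_
    · exact continuousOn_finset_sum _ fun l _ =>
        ((hφC l k).continuous.comp_continuousOn hγc).mul
          ((hDφcont i j l).comp_continuousOn hγc)
    · exact continuousOn_finset_sum _ fun l _ =>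
        ((hφC l j).continuous.comp_continuousOn hγc).mul
          ((hDφcont i k l).comp_continuousOn hγc)
  -- the derivative of a
  have hader : ∀ s ∈ Set.Ico (0:ℝ) T, HasDerivWithinAt a
      (fun i j k => ∑ m, Dψ i (γ s) (eL m) * a s m j k) (Set.Ici s) s := by
    intro s hs
    have hsI : s ∈ Set.Icc (0:ℝ) T := Set.Ico_subset_Icc_self hs
    have hγd : HasDerivWithinAt γ ((1:ℝ), u s (X s)) (Set.Icc 0 T) s := by
      refine HasDerivWithinAt.prodMk ?_ (hX s hsI)
      exact hasDerivWithinAt_id s (Set.Icc (0:ℝ) T)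
    have h1 : ∀ b c : Fin 3, HasDerivWithinAt (fun r => φ b c (γ r))
        (Dφ b c (s, X s) ((1:ℝ), u s (X s))) (Set.Icc 0 T) s :=
      fun b c => ((hφd b c (s, X s)).comp_hasDerivWithinAt s hγd :)
    have h2 : ∀ (b c : Fin 3) (w : P3), HasDerivWithinAt (fun r => Dφ b c (γ r) w)
        (D2φ b c (s, X s) ((1:ℝ), u s (X s)) w) (Set.Icc 0 T) s := by
      intro b c w
      have h' := ((hφd2 b c (s, X s)).comp_hasDerivWithinAt s hγd).clm_apply
        (hasDerivWithinAt_const s (Set.Icc (0:ℝ) T) w)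
      simpa using h'
    have hraw : ∀ i j k : Fin 3, HasDerivWithinAt (fun r => a r i j k)
        ((∑ l, (Dφ l k (s, X s) ((1:ℝ), u s (X s)) * Dφ i j (s, X s) (eL l)
            + φ l k (s, X s) * D2φ i j (s, X s) ((1:ℝ), u s (X s)) (eL l)))
          - ∑ l, (Dφ l j (s, X s) ((1:ℝ), u s (X s)) * Dφ i k (s, X s) (eL l)
            + φ l j (s, X s) * D2φ i k (s, X s) ((1:ℝ), u s (X s)) (eL l)))
        (Set.Icc 0 T) s := by
      intro i j k
      exact HasDerivWithinAt.sub
        (HasDerivWithinAt.fun_sum fun l _ => (h1 l k).fun_mul (h2 i j (eL l)))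
        (HasDerivWithinAt.fun_sum fun l _ => (h1 l j).fun_mul (h2 i k (eL l)))
    refine hasDerivWithinAt_pi.2 fun i => hasDerivWithinAt_pi.2 fun j =>
      hasDerivWithinAt_pi.2 fun k => ?_
    have h' := hraw i j k
    rw [halg s hsI (X s) i j k] at h'
    exact h'.mono_of_mem_nhdsWithin (Icc_mem_nhdsGE_of_mem hs)
  -- initial value
  have ha0 : a 0 = 0 := by
    funext i j k
    have h := h0 (X 0) i j k
    simp only [pdF] at h
    show (∑ l, φ l k (0, X 0) * Dφ i j (0, X 0) (eL l))
      - (∑ l, φ l j (0, X 0) * Dφ i k (0, X 0) (eL l)) = 0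
    rw [sub_eq_zero]
    exact h
  -- Gronwall
  have hgron := norm_le_gronwallBound_of_norm_deriv_right_le (f := a)
    (f' := fun s i j k => ∑ m, Dψ i (γ s) (eL m) * a s m j k)
    (δ := 0) (K := 3 * CB) (ε := 0) (a := 0) (b := T)
    hac hader (by rw [ha0]; simp) ?bound
  case bound =>
    intro s hs
    rw [add_zero]
    refine pi_norm_le_iff_of_nonneg (by positivity) |>.2 fun i => ?_
    refine pi_norm_le_iff_of_nonneg (by positivity) |>.2 fun j => ?_
    refine pi_norm_le_iff_of_nonneg (by positivity) |>.2 fun k => ?_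
    rw [Real.norm_eq_abs]
    have hsI : s ∈ Set.Icc (0:ℝ) T := Set.Ico_subset_Icc_self hs
    calc |∑ m, Dψ i (γ s) (eL m) * a s m j k|
        ≤ ∑ m, |Dψ i (γ s) (eL m) * a s m j k| := Finset.abs_sum_le_sum_abs _ _
      _ ≤ ∑ _m : Fin 3, CB * ‖a s‖ := by
          refine Finset.sum_le_sum fun m _ => ?_
          rw [abs_mul]
          have hb1 : |Dψ i (γ s) (eL m)| ≤ CB := hubd2 s hsI (X s) i m
          have hb2 : |a s m j k| ≤ ‖a s‖ := by
            calc |a s m j k| = ‖a s m j k‖ := (Real.norm_eq_abs _).symm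
              _ ≤ ‖a s m j‖ := norm_le_pi_norm (a s m j) k
              _ ≤ ‖a s m‖ := norm_le_pi_norm (a s m) j
              _ ≤ ‖a s‖ := norm_le_pi_norm (a s) m
          exact mul_le_mul hb1 hb2 (abs_nonneg _) hCB0
      _ = 3 * CB * ‖a s‖ := by
          rw [Finset.sum_const]
          simp
          ring
  -- conclude
  have hat0 : a t0 = 0 := by
    have hg1 := hgron t0 ht0
    rw [sub_zero, gronwallBound_ε0_δ0] at hg1
    exact norm_le_zero_iff.mp hg1
  have h2 := congrFun (congrFun (congrFun hat0 i0) j0) k0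
  simp only [hadef, hγdef, hX0, Pi.zero_apply] at h2
  simp only [pdF]
  exact sub_eq_zero.mp h2
end

section
/- Let T > 0 and let ρ : [0,T] × ℝ³ → ℝ, u : [0,T] × ℝ³ → ℝ³, E : [0,T] × ℝ³ → M³ˣ³(ℝ) be continuously differentiable with ρ bounded, satisfying pointwise the continuity equation ∂_t ρ + div(ρu) = 0, the equation ∂_t E + u·∇E = ∇u E + ∇u, and the constraint div(ρ(I+E)ᵀ) = 0, i.e. Σ_j ∂_j(ρ(δ_{ij} + E_{ji})) = 0 for each i and all (t,x). Suppose there is a compact set K ⊂ ℝ³ such that u(t,·) and E(t,·) vanish outside K for every t ∈ [0,T]. Then for every t ∈ [0,T]: ∫_{ℝ³} ρ(t,x) tr E(t,x) dx = ∫_{ℝ³} ρ(0,x) tr E(0,x) dx. -/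
open MeasureTheory

section helpers

lemma contDiff_slice {h : ℝ → (Fin 3 → ℝ) → ℝ} (hh : ContDiff ℝ 1 (Function.uncurry h))
    (t : ℝ) : ContDiff ℝ 1 (h t) :=
  hh.comp (contDiff_prodMk_right t)

lemma hasDerivAt_slice {h : ℝ → (Fin 3 → ℝ) → ℝ} (hh : ContDiff ℝ 1 (Function.uncurry h))
    (t : ℝ) (x : Fin 3 → ℝ) :
    HasDerivAt (fun s => h s x) (fderiv ℝ (Function.uncurry h) (t, x) (1, 0)) t := by
  have H := (hh.differentiable one_ne_zero (t, x)).hasFDerivAt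
  have hline : HasFDerivAt (fun s : ℝ => (s, x))
      (ContinuousLinearMap.inl ℝ ℝ (Fin 3 → ℝ)) t :=
    (hasFDerivAt_id t).prodMk (hasFDerivAt_const x t)
  have := (H.comp t hline).hasDerivAt
  simpa [Function.comp_def] using this

lemma pd_mul {f g : (Fin 3 → ℝ) → ℝ} {x : Fin 3 → ℝ}
    (hf : DifferentiableAt ℝ f x) (hg : DifferentiableAt ℝ g x) (j : Fin 3) :
    pd j (fun y => f y * g y) x = pd j f x * g x + f x * pd j g x := by
  unfold pd
  rw [fderiv_fun_mul hf hg]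
  simp [ContinuousLinearMap.add_apply, ContinuousLinearMap.smul_apply, smul_eq_mul]
  ring

lemma pd_sum {ι : Type*} {s : Finset ι} {f : ι → (Fin 3 → ℝ) → ℝ} {x : Fin 3 → ℝ}
    (hf : ∀ i ∈ s, DifferentiableAt ℝ (f i) x) (j : Fin 3) :
    pd j (fun y => ∑ i ∈ s, f i y) x = ∑ i ∈ s, pd j (f i) x := by
  unfold pd
  rw [fderiv_fun_sum hf]
  simp

lemma pd_const_add (c : ℝ) {f : (Fin 3 → ℝ) → ℝ} {x : Fin 3 → ℝ} (j : Fin 3) :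
    pd j (fun y => c + f y) x = pd j f x := by
  unfold pd
  rw [fderiv_const_add]

lemma pd_add {f g : (Fin 3 → ℝ) → ℝ} {x : Fin 3 → ℝ}
    (hf : DifferentiableAt ℝ f x) (hg : DifferentiableAt ℝ g x) (j : Fin 3) :
    pd j (fun y => f y + g y) x = pd j f x + pd j g x := by
  unfold pd
  rw [fderiv_fun_add hf hg]; simp

lemma pd_sub {f g : (Fin 3 → ℝ) → ℝ} {x : Fin 3 → ℝ}
    (hf : DifferentiableAt ℝ f x) (hg : DifferentiableAt ℝ g x) (j : Fin 3) :
    pd j (fun y => f y - g y) x = pd j f x - pd j g x := by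
  unfold pd
  rw [fderiv_fun_sub hf hg]; simp

lemma integrable_pd {g : (Fin 3 → ℝ) → ℝ} (hg : ContDiff ℝ 1 g)
    {K : Set (Fin 3 → ℝ)} (hK : IsCompact K) (hsup : ∀ x ∉ K, g x = 0) (j : Fin 3) :
    Integrable (fun x => pd j g x) := by
  have hfz : ∀ x ∉ K, fderiv ℝ g x = 0 := by
    intro x hx
    have hev : g =ᶠ[nhds x] fun _ => (0 : ℝ) :=
      Filter.eventually_of_mem (hK.isClosed.isOpen_compl.mem_nhds hx) fun y hy => hsup y hy
    rw [hev.fderiv_eq]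
    exact fderiv_const_apply 0
  have hpd_cont : Continuous fun x => fderiv ℝ g x (Pi.single j 1) :=
    (hg.continuous_fderiv one_ne_zero).clm_apply continuous_const
  have hcs' : HasCompactSupport fun x => fderiv ℝ g x (Pi.single j 1) :=
    HasCompactSupport.intro hK fun x hx => by rw [hfz x hx]; rfl
  exact hpd_cont.integrable_of_hasCompactSupport hcs'

lemma integral_pd_eq_zero {g : (Fin 3 → ℝ) → ℝ} (hg : ContDiff ℝ 1 g)
    {K : Set (Fin 3 → ℝ)} (hK : IsCompact K) (hsup : ∀ x ∉ K, g x = 0) (j : Fin 3) :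
    ∫ x : Fin 3 → ℝ, pd j g x = 0 := by
  have hgdiff : Differentiable ℝ g := hg.differentiable one_ne_zero
  have hcs : HasCompactSupport g := HasCompactSupport.intro hK hsup
  have hint_g : Integrable g := hg.continuous.integrable_of_hasCompactSupport hcs
  have hint' := integrable_pd hg hK hsup j
  have H := integral_mul_fderiv_eq_neg_fderiv_mul_of_integrable
    (μ := (volume : Measure (Fin 3 → ℝ)))
    (f := fun _ : Fin 3 → ℝ => (1 : ℝ)) (g := g) (v := Pi.single j 1)
    (by simpa [fderiv_const] using (integrable_zero _ ℝ (volume : Measure (Fin 3 → ℝ))))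
    (by simpa [pd] using hint') (by simpa using hint_g)
    (fun x _ => differentiable_const (1 : ℝ) x) (fun x _ => hgdiff x)
  simpa [pd, fderiv_const] using H

lemma alg_identity (r ρ' : ℝ) (pr U e' : Fin 3 → ℝ) (pU e : Fin 3 → Fin 3 → ℝ)
    (pe : Fin 3 → Fin 3 → Fin 3 → ℝ)
    (Hm : ρ' + ∑ j, (pr j * U j + r * pU j j) = 0)
    (HB : ∀ i, e' i + ∑ k, U k * pe k i i = (∑ k, pU i k * e k i) + pU i i)
    (Hc : ∀ i, ∑ j, (pr j * ((if i = j then (1 : ℝ) else 0) + e j i) + r * pe j j i) = 0) :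
    ρ' * (∑ i, e i i) + r * ∑ i, e' i
      = ∑ j, ((pr j * U j + r * pU j j)
          + (∑ i, ((pr j * e j i + r * pe j j i) * U i + r * e j i * pU i j))
          - ((pr j * U j + r * pU j j) * (∑ i, e i i) + r * U j * ∑ i, pe j i i)) := by
  have h0 := HB 0; have h1 := HB 1; have h2 := HB 2
  have c0 := Hc 0; have c1 := Hc 1; have c2 := Hc 2
  simp only [Fin.sum_univ_three] at Hm h0 h1 h2 c0 c1 c2 ⊢
  norm_num [Fin.ext_iff] at c0 c1 c2
  linear_combination (e 0 0 + e 1 1 + e 2 2) * Hm + r * (h0 + h1 + h2)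
    - U 0 * c0 - U 1 * c1 - U 2 * c2

end helpers

noncomputable def PhiF (ρ : ℝ → (Fin 3 → ℝ) → ℝ)
    (E : ℝ → (Fin 3 → ℝ) → Fin 3 → Fin 3 → ℝ) : ℝ × (Fin 3 → ℝ) → ℝ :=
  fun p => ρ p.1 p.2 * ∑ i, E p.1 p.2 i i

noncomputable def PsiF (ρ : ℝ → (Fin 3 → ℝ) → ℝ)
    (E : ℝ → (Fin 3 → ℝ) → Fin 3 → Fin 3 → ℝ) : ℝ × (Fin 3 → ℝ) → ℝ :=
  fun p => fderiv ℝ (PhiF ρ E) p (1, 0)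

/-- **Conservation law (7.6).** If `ρ` (bounded), `u`, `E` are `C¹`, satisfy the continuity
equation, the equation `∂_t E + u·∇E = ∇u E + ∇u`, and the constraint `div(ρ(I+E)ᵀ) = 0`, and
`u(t,·)`, `E(t,·)` vanish outside a fixed compact set, then `∫ ρ tr E dx` is conserved. -/
theorem conservation_of_rho_trace_E
    (T : ℝ) (hT : 0 < T)
    (ρ : ℝ → (Fin 3 → ℝ) → ℝ)
    (u : ℝ → (Fin 3 → ℝ) → Fin 3 → ℝ)
    (E : ℝ → (Fin 3 → ℝ) → Fin 3 → Fin 3 → ℝ)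
    (hρ : ContDiff ℝ 1 (Function.uncurry ρ))
    (hu : ContDiff ℝ 1 (Function.uncurry u))
    (hE : ContDiff ℝ 1 (Function.uncurry E))
    (hρbdd : ∃ C : ℝ, ∀ t ∈ Set.Icc (0 : ℝ) T, ∀ x : Fin 3 → ℝ, |ρ t x| ≤ C)
    (hmass : ∀ t ∈ Set.Icc (0 : ℝ) T, ∀ x : Fin 3 → ℝ,
      deriv (fun s => ρ s x) t + ∑ j, pd j (fun y => ρ t y * u t y j) x = 0)
    (hEeq : ∀ t ∈ Set.Icc (0 : ℝ) T, ∀ x : Fin 3 → ℝ, ∀ i j : Fin 3,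
      deriv (fun s => E s x i j) t + ∑ k, u t x k * pd k (fun y => E t y i j) x
        = (∑ k, pd k (fun y => u t y i) x * E t x k j) + pd j (fun y => u t y i) x)
    (hconstraint : ∀ t ∈ Set.Icc (0 : ℝ) T, ∀ x : Fin 3 → ℝ, ∀ i : Fin 3,
      ∑ j, pd j (fun y => ρ t y * ((if i = j then (1 : ℝ) else 0) + E t y j i)) x = 0)
    (hsupp : ∃ K : Set (Fin 3 → ℝ), IsCompact K ∧ ∀ t ∈ Set.Icc (0 : ℝ) T, ∀ x ∉ K,
      u t x = 0 ∧ (∀ i j : Fin 3, E t x i j = 0)) :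
    ∀ t ∈ Set.Icc (0 : ℝ) T,
      ∫ x : Fin 3 → ℝ, ρ t x * ∑ i, E t x i i
        = ∫ x : Fin 3 → ℝ, ρ 0 x * ∑ i, E 0 x i i := by
  obtain ⟨K, hK, hKsupp⟩ := hsupp
  have hEijC : ∀ i j : Fin 3, ContDiff ℝ 1 (fun p : ℝ × (Fin 3 → ℝ) => E p.1 p.2 i j) :=
    fun i j => (ContinuousLinearMap.proj (R := ℝ) (φ := fun _ : Fin 3 => ℝ) j).contDiff.comp
      ((ContinuousLinearMap.proj (R := ℝ) (φ := fun _ : Fin 3 => Fin 3 → ℝ) i).contDiff.comp hE)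
  have huiC : ∀ i : Fin 3, ContDiff ℝ 1 (fun p : ℝ × (Fin 3 → ℝ) => u p.1 p.2 i) :=
    fun i => (ContinuousLinearMap.proj (R := ℝ) (φ := fun _ : Fin 3 => ℝ) i).contDiff.comp hu
  have hΦ : ContDiff ℝ 1 (PhiF ρ E) :=
    hρ.mul (ContDiff.sum fun i _ => hEijC i i)
  have hψc : Continuous (PsiF ρ E) :=
    (hΦ.continuous_fderiv one_ne_zero).clm_apply continuous_const
  have hslice : ∀ (s : ℝ) (x : Fin 3 → ℝ),
      HasDerivAt (fun s' => ρ s' x * ∑ i, E s' x i i) (PsiF ρ E (s, x)) s :=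
    fun s x => hasDerivAt_slice (h := fun a b => ρ a b * ∑ i, E a b i i) hΦ s x
  have hAScont : ∀ s : ℝ, Continuous fun x => ρ s x * ∑ i, E s x i i :=
    fun s => (contDiff_slice (h := fun a b => ρ a b * ∑ i, E a b i i) hΦ s).continuous
  -- the time derivative of the integrand integrates to zero on [0,T]
  have hzero : ∀ s ∈ Set.Icc (0 : ℝ) T, ∫ x : Fin 3 → ℝ, PsiF ρ E (s, x) = 0 := by
    intro s hs
    have hrC : ContDiff ℝ 1 (ρ s) := contDiff_slice hρ s
    have hUdC : ∀ i, ContDiff ℝ 1 (fun y => u s y i) :=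
      fun i => contDiff_slice (h := fun a b => u a b i) (huiC i) s
    have heC : ∀ a b : Fin 3, ContDiff ℝ 1 (fun y => E s y a b) :=
      fun a b => contDiff_slice (h := fun c d => E c d a b) (hEijC a b) s
    set Gf : Fin 3 → (Fin 3 → ℝ) → ℝ := fun j y =>
      ρ s y * u s y j + (∑ i, ρ s y * E s y j i * u s y i)
        - ρ s y * u s y j * ∑ i, E s y i i with hGfdef
    have hGC : ∀ j, ContDiff ℝ 1 (Gf j) := by
      intro j
      simp only [hGfdef]
      exact ((hrC.mul (hUdC j)).add
        (ContDiff.sum fun i _ => (hrC.mul (heC j i)).mul (hUdC i))).sub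
        ((hrC.mul (hUdC j)).mul (ContDiff.sum fun i _ => heC i i))
    have hGsupp : ∀ j, ∀ x ∉ K, Gf j x = 0 := by
      intro j x hx
      have h1 := (hKsupp s hs x hx).1
      have hu0 : ∀ i, u s x i = 0 := fun i => by rw [h1]; rfl
      simp only [hGfdef]
      simp [hu0]
    have hintpd : ∀ j, ∫ x : Fin 3 → ℝ, pd j (Gf j) x = 0 :=
      fun j => integral_pd_eq_zero (hGC j) hK (hGsupp j) j
    have hpt : ∀ x : Fin 3 → ℝ, PsiF ρ E (s, x) = ∑ j, pd j (Gf j) x := by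
      intro x
      -- differentiability of spatial slices at x
      have hrd : DifferentiableAt ℝ (ρ s) x := (hrC.differentiable one_ne_zero) x
      have hUd : ∀ i, DifferentiableAt ℝ (fun y => u s y i) x :=
        fun i => ((hUdC i).differentiable one_ne_zero) x
      have hed : ∀ a b : Fin 3, DifferentiableAt ℝ (fun y => E s y a b) x :=
        fun a b => ((heC a b).differentiable one_ne_zero) x
      -- time derivative value
      have hrt : HasDerivAt (fun s' => ρ s' x) (deriv (fun s' => ρ s' x) s) s :=
        (hasDerivAt_slice (h := ρ) hρ s x).differentiableAt.hasDerivAt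
      have hExd : ∀ i j : Fin 3,
          HasDerivAt (fun s' => E s' x i j) (deriv (fun s' => E s' x i j) s) s :=
        fun i j => (hasDerivAt_slice (h := fun a b => E a b i j)
          (hEijC i j) s x).differentiableAt.hasDerivAt
      have hsum : HasDerivAt (fun s' => ∑ i, E s' x i i)
          (∑ i, deriv (fun s' => E s' x i i) s) s :=
        HasDerivAt.fun_sum fun i _ => hExd i i
      have hPsival : PsiF ρ E (s, x)
          = deriv (fun s' => ρ s' x) s * (∑ i, E s x i i)
            + ρ s x * ∑ i, deriv (fun s' => E s' x i i) s :=
        (hslice s x).unique (hrt.mul hsum)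
      -- expansion of the divergence terms
      have hA : ∀ j, DifferentiableAt ℝ (fun y => ρ s y * u s y j) x :=
        fun j => hrd.mul (hUd j)
      have hBi : ∀ j i, DifferentiableAt ℝ (fun y => ρ s y * E s y j i * u s y i) x :=
        fun j i => (hrd.mul (hed j i)).mul (hUd i)
      have hB : ∀ j, DifferentiableAt ℝ (fun y => ∑ i, ρ s y * E s y j i * u s y i) x :=
        fun j => DifferentiableAt.fun_sum fun i _ => hBi j i
      have hSE : DifferentiableAt ℝ (fun y => ∑ i, E s y i i) x :=
        DifferentiableAt.fun_sum fun i _ => hed i i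
      have e2 : ∀ j i, pd j (fun y => ρ s y * E s y j i * u s y i) x
          = pd j (fun y => ρ s y * E s y j i) x * u s x i
            + ρ s x * E s x j i * pd j (fun y => u s y i) x :=
        fun j i => pd_mul (hrd.mul (hed j i)) (hUd i) j
      have e2' : ∀ j i, pd j (fun y => ρ s y * E s y j i) x
          = pd j (ρ s) x * E s x j i + ρ s x * pd j (fun y => E s y j i) x :=
        fun j i => pd_mul hrd (hed j i) j
      have hpdG : ∀ j, pd j (Gf j) x
          = (pd j (ρ s) x * u s x j + ρ s x * pd j (fun y => u s y j) x)
            + (∑ i, ((pd j (ρ s) x * E s x j i + ρ s x * pd j (fun y => E s y j i) x) * u s x i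
                + ρ s x * E s x j i * pd j (fun y => u s y i) x))
            - ((pd j (ρ s) x * u s x j + ρ s x * pd j (fun y => u s y j) x) * (∑ i, E s x i i)
                + ρ s x * u s x j * ∑ i, pd j (fun y => E s y i i) x) := by
        intro j
        simp only [hGfdef]
        rw [pd_sub ((hA j).fun_add (hB j)) ((hA j).fun_mul hSE) j,
          pd_add (hA j) (hB j) j,
          pd_mul hrd (hUd j) j,
          pd_sum (fun i _ => hBi j i) j,
          pd_mul (hA j) hSE j,
          pd_mul hrd (hUd j) j,
          pd_sum (fun i _ => hed i i) j]
        simp only [e2, e2']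

      -- the PDE hypotheses in expanded form
      have em : ∀ j, pd j (fun y => ρ s y * u s y j) x
          = pd j (ρ s) x * u s x j + ρ s x * pd j (fun y => u s y j) x :=
        fun j => pd_mul hrd (hUd j) j
      have Hm : deriv (fun s' => ρ s' x) s
          + ∑ j, (pd j (ρ s) x * u s x j + ρ s x * pd j (fun y => u s y j) x) = 0 := by
        have := hmass s hs x
        simpa only [em] using this
      have HB' : ∀ i : Fin 3, deriv (fun s' => E s' x i i) s
          + ∑ k, u s x k * pd k (fun y => E s y i i) x
          = (∑ k, pd k (fun y => u s y i) x * E s x k i) + pd i (fun y => u s y i) x :=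
        fun i => hEeq s hs x i i
      have ec : ∀ (i j : Fin 3),
          pd j (fun y => ρ s y * ((if i = j then (1 : ℝ) else 0) + E s y j i)) x
          = pd j (ρ s) x * ((if i = j then (1 : ℝ) else 0) + E s x j i)
            + ρ s x * pd j (fun y => E s y j i) x := by
        intro i j
        rw [pd_mul hrd ((hed j i).const_add _) j, pd_const_add]
      have Hc : ∀ i : Fin 3,
          ∑ j, (pd j (ρ s) x * ((if i = j then (1 : ℝ) else 0) + E s x j i)
            + ρ s x * pd j (fun y => E s y j i) x) = 0 := by
        intro i
        have := hconstraint s hs x i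
        simpa only [ec] using this
      have halg := alg_identity (ρ s x) (deriv (fun s' => ρ s' x) s)
        (fun j => pd j (ρ s) x) (fun j => u s x j)
        (fun i => deriv (fun s' => E s' x i i) s)
        (fun i k => pd k (fun y => u s y i) x)
        (fun i j => E s x i j)
        (fun k a b => pd k (fun y => E s y a b) x)
        Hm HB' Hc
      rw [hPsival]
      rw [Finset.sum_congr rfl fun j _ => hpdG j]
      exact halg
    calc ∫ x : Fin 3 → ℝ, PsiF ρ E (s, x)
        = ∫ x : Fin 3 → ℝ, ∑ j, pd j (Gf j) x := by
          exact integral_congr_ae (Filter.Eventually.of_forall hpt)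
      _ = ∑ j, ∫ x : Fin 3 → ℝ, pd j (Gf j) x :=
          integral_finset_sum _ fun j _ => integrable_pd (hGC j) hK (hGsupp j) j
      _ = 0 := by simp [hintpd]
  -- integrability of the integrand for t ∈ [0,T]
  have hint : ∀ s ∈ Set.Icc (0 : ℝ) T, Integrable (fun x => ρ s x * ∑ i, E s x i i) := by
    intro s hs
    refine (hAScont s).integrable_of_hasCompactSupport (HasCompactSupport.intro hK ?_)
    intro x hx
    simp [(hKsupp s hs x hx).2]
  -- continuity of the integral on [0,T]
  have hcont : ContinuousOn (fun t => ∫ x : Fin 3 → ℝ, ρ t x * ∑ i, E t x i i)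
      (Set.Icc (0 : ℝ) T) := by
    obtain ⟨C0, hC0⟩ := (isCompact_Icc.prod hK).exists_bound_of_continuousOn
      (hΦ.continuous.continuousOn (s := Set.Icc (0 : ℝ) T ×ˢ K))
    intro t0 ht0
    refine continuousWithinAt_of_dominated (bound := K.indicator fun _ => C0)
      (Filter.Eventually.of_forall fun s => (hAScont s).aestronglyMeasurable) ?_ ?_ ?_
    · filter_upwards [eventually_mem_nhdsWithin] with s hs
      refine Filter.Eventually.of_forall fun x => ?_
      by_cases hx : x ∈ K
      · rw [Set.indicator_of_mem hx]
        exact hC0 (s, x) ⟨hs, hx⟩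
      · rw [Set.indicator_of_notMem hx]
        have : (∀ i j : Fin 3, E s x i j = 0) := (hKsupp s hs x hx).2
        simp [this]
    · exact (integrable_indicator_iff hK.measurableSet).2
        (integrableOn_const hK.measure_lt_top.ne)
    · refine Filter.Eventually.of_forall fun x => ?_
      exact (hΦ.continuous.comp (continuous_id.prodMk continuous_const)).continuousWithinAt
  -- zero derivative on the interior
  have hderiv : ∀ t ∈ Set.Ioo (0 : ℝ) T,
      HasDerivAt (fun t => ∫ x : Fin 3 → ℝ, ρ t x * ∑ i, E t x i i) 0 t := by
    intro t ht
    set ε : ℝ := min t (T - t) with hεdef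
    have hεpos : 0 < ε := lt_min ht.1 (sub_pos.2 ht.2)
    have hball : Metric.ball t ε ⊆ Set.Ioo (0 : ℝ) T := by
      intro s hs
      rw [Real.ball_eq_Ioo] at hs
      constructor
      · have : t - ε ≥ 0 := by
          have := min_le_left t (T - t); simp only [hεdef] at *; linarith
        linarith [hs.1]
      · have : t + ε ≤ T := by
          have := min_le_right t (T - t); simp only [hεdef] at *; linarith
        linarith [hs.2]
    obtain ⟨C1, hC1⟩ := ((isCompact_Icc (a := t - ε) (b := t + ε)).prod hK).exists_bound_of_continuousOn
      (hψc.continuousOn (s := Set.Icc (t - ε) (t + ε) ×ˢ K))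
    have Hd := (hasDerivAt_integral_of_dominated_loc_of_deriv_le
      (μ := (volume : Measure (Fin 3 → ℝ)))
      (F := fun s x => ρ s x * ∑ i, E s x i i)
      (F' := fun s x => PsiF ρ E (s, x)) (x₀ := t)
      (bound := K.indicator fun _ => C1) (Metric.ball_mem_nhds t hεpos)
      (Filter.Eventually.of_forall fun s => (hAScont s).aestronglyMeasurable)
      (hint t (Set.Ioo_subset_Icc_self ht))
      ((hψc.comp (continuous_const.prodMk continuous_id)).aestronglyMeasurable)
      ?_ ?_ ?_).2
    · rwa [hzero t (Set.Ioo_subset_Icc_self ht)] at Hd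
    · refine Filter.Eventually.of_forall fun x s hs => ?_
      by_cases hx : x ∈ K
      · rw [Set.indicator_of_mem hx]
        refine hC1 (s, x) ⟨?_, hx⟩
        rw [Real.ball_eq_Ioo] at hs
        exact ⟨hs.1.le, hs.2.le⟩
      · rw [Set.indicator_of_notMem hx]
        have hps : PsiF ρ E (s, x) = 0 := by
          have hopen : IsOpen (Set.Ioo (0 : ℝ) T ×ˢ Kᶜ) :=
            isOpen_Ioo.prod hK.isClosed.isOpen_compl
          have hmem : (s, x) ∈ Set.Ioo (0 : ℝ) T ×ˢ Kᶜ := ⟨hball hs, hx⟩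
          have hev : PhiF ρ E =ᶠ[nhds (s, x)] fun _ => (0 : ℝ) := by
            filter_upwards [hopen.mem_nhds hmem] with q hq
            have := (hKsupp q.1 (Set.Ioo_subset_Icc_self hq.1) q.2 hq.2).2
            simp [PhiF, this]
          simp only [PsiF]
          rw [hev.fderiv_eq, fderiv_const_apply]
          rfl
        simp [hps]
    · exact (integrable_indicator_iff hK.measurableSet).2
        (integrableOn_const hK.measure_lt_top.ne)
    · exact Filter.Eventually.of_forall fun x s _ => hslice s x
  -- conclude: the integral is constant on [0,T]
  have hmono : MonotoneOn (fun t => ∫ x : Fin 3 → ℝ, ρ t x * ∑ i, E t x i i)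
      (Set.Icc (0 : ℝ) T) := by
    refine monotoneOn_of_deriv_nonneg (convex_Icc 0 T) hcont ?_ ?_
    · rw [interior_Icc]
      exact fun s hs => (hderiv s hs).differentiableAt.differentiableWithinAt
    · rw [interior_Icc]
      intro s hs
      rw [(hderiv s hs).deriv]
  have hanti : AntitoneOn (fun t => ∫ x : Fin 3 → ℝ, ρ t x * ∑ i, E t x i i)
      (Set.Icc (0 : ℝ) T) := by
    refine antitoneOn_of_deriv_nonpos (convex_Icc 0 T) hcont ?_ ?_
    · rw [interior_Icc]
      exact fun s hs => (hderiv s hs).differentiableAt.differentiableWithinAt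
    · rw [interior_Icc]
      intro s hs
      rw [(hderiv s hs).deriv]
  intro t ht
  have h0 : (0 : ℝ) ∈ Set.Icc (0 : ℝ) T := ⟨le_refl 0, hT.le⟩
  exact le_antisymm (hanti h0 ht ht.1) (hmono h0 ht ht.1)
end

section
/- Let q ≥ 2 be a real number, u : ℝ³ → ℝ³ continuously differentiable with compact support, and φ : ℝ³ → ℝ twice continuously differentiable; set σ := ∇φ. Then: ∫_{ℝ³} ∇(u·σ)·σ |σ|^{q−2} dx = ∫_{ℝ³} ( Σ_{j,k} (∂_j u_k) σ_k σ_j ) |σ|^{q−2} dx − (1/q) ∫_{ℝ³} |σ|^q div u dx. -/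
open MeasureTheory

lemma pd_eq (i : Fin 3) (f : (Fin 3 → ℝ) → ℝ) (x : Fin 3 → ℝ) :
    pd i f x = fderiv ℝ f x (Pi.single i 1) := rfl

/-- The integral of a directional derivative of a compactly supported `C^1` function vanishes. -/
lemma integral_fderiv_apply_eq_zero
    {g : (Fin 3 → ℝ) → ℝ} (hg : ContDiff ℝ 1 g) (hgs : HasCompactSupport g)
    (v : Fin 3 → ℝ) : ∫ x : Fin 3 → ℝ, fderiv ℝ g x v = 0 := by
  obtain ⟨C, hC⟩ := ContDiff.lipschitzWith_of_hasCompactSupport hgs hg one_ne_zero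
  have h := LipschitzWith.integral_lineDeriv_mul_eq (μ := (volume : Measure (Fin 3 → ℝ)))
    (LipschitzWith.const (1 : ℝ)) hC hgs v
  have h1 : ∀ x : Fin 3 → ℝ, lineDeriv ℝ (fun _ : Fin 3 → ℝ => (1:ℝ)) x v * g x = 0 := by
    intro x
    have : lineDeriv ℝ (fun _ : Fin 3 → ℝ => (1:ℝ)) x v = 0 := by
      rw [(differentiableAt_const (1:ℝ)).lineDeriv_eq_fderiv, fderiv_fun_const]
      simp
    simp [this]
  have h2 : ∀ x : Fin 3 → ℝ, lineDeriv ℝ g x (-v) * 1 = - fderiv ℝ g x v := by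
    intro x
    rw [((hg.differentiable one_ne_zero) x).lineDeriv_eq_fderiv]
    simp
  simp only [h1, h2, integral_zero, integral_neg] at h
  linarith

/-- Pure algebra identity underlying the pointwise computation. -/
lemma aux_alg (q P : ℝ) (hq : q ≠ 0) (B C : Fin 3 → Fin 3 → ℝ) (a c d : Fin 3 → ℝ)
    (hB : ∀ j k, B j k = B k j) :
    (∑ j, (∑ k, (a k * B j k + c k * C j k)) * d j) * P
      = (∑ j, ∑ k, C j k * c k * d j) * P
        + (1/q) * ∑ k, a k * (q * (P * ∑ j, d j * B k j)) := by
  simp only [Fin.sum_univ_three]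
  rw [hB 1 0, hB 2 0, hB 2 1]
  field_simp
  ring

/-- Integration-by-parts identity for gradient fields `σ = ∇φ` (key computation in Lemma 6.2):
`∫ ∇(u·σ)·σ |σ|^{q−2} dx = ∫ (Σ_{j,k} (∂_j u_k) σ_k σ_j) |σ|^{q−2} dx − (1/q)∫ |σ|^q div u dx`. -/
theorem ibp_gradient_field_identity
    (q : ℝ) (hq : 2 ≤ q)
    (u : (Fin 3 → ℝ) → Fin 3 → ℝ) (φ : (Fin 3 → ℝ) → ℝ)
    (hu : ContDiff ℝ 1 u) (husupp : HasCompactSupport u)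
    (hφ : ContDiff ℝ 2 φ) :
    (∫ x : Fin 3 → ℝ,
        (∑ j, pd j (fun y => ∑ k, u y k * pd k φ y) x * pd j φ x)
          * Real.sqrt (∑ j, (pd j φ x) ^ 2) ^ (q - 2))
      = (∫ x : Fin 3 → ℝ,
          (∑ j, ∑ k, pd j (fun y => u y k) x * pd k φ x * pd j φ x)
            * Real.sqrt (∑ j, (pd j φ x) ^ 2) ^ (q - 2))
        - (1 / q) * ∫ x : Fin 3 → ℝ,
            Real.sqrt (∑ j, (pd j φ x) ^ 2) ^ q * (∑ j, pd j (fun y => u y j) x) := by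
  have q0 : (0:ℝ) < q := by linarith
  -- basic smoothness facts
  have hφ1 : ContDiff ℝ 1 (fderiv ℝ φ) := hφ.fderiv_right (by norm_num)
  have hf'' : ∀ x, HasFDerivAt (fderiv ℝ φ) (fderiv ℝ (fderiv ℝ φ) x) x :=
    fun x => ((hφ1.differentiable one_ne_zero) x).hasFDerivAt
  have hσ1 : ∀ k, ContDiff ℝ 1 (pd k φ) := by
    intro k
    have h := ((ContinuousLinearMap.apply ℝ ℝ (Pi.single k 1)).contDiff (n := 1)).comp hφ1
    exact h
  have hσd : ∀ k x, DifferentiableAt ℝ (pd k φ) x := fun k x => ((hσ1 k).differentiable one_ne_zero) x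
  have hud : ∀ k, ContDiff ℝ 1 (fun y => u y k) := fun k => contDiff_pi.mp hu k
  have hs1 : ContDiff ℝ 1 (fun x => ∑ j, (pd j φ x) ^ 2) :=
    ContDiff.sum fun j _ => (hσ1 j).pow 2
  have hs0 : ∀ x, (0:ℝ) ≤ ∑ j, (pd j φ x) ^ 2 :=
    fun x => Finset.sum_nonneg fun j _ => sq_nonneg _
  -- second derivatives and symmetry
  have hσfd : ∀ (k : Fin 3) (x), HasFDerivAt (pd k φ)
      ((ContinuousLinearMap.apply ℝ ℝ (Pi.single k 1)).comp (fderiv ℝ (fderiv ℝ φ) x)) x := by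
    intro k x
    have h := ((ContinuousLinearMap.apply ℝ ℝ (Pi.single k 1)).hasFDerivAt
      (x := fderiv ℝ φ x)).comp x (hf'' x)
    exact h
  have hσpd : ∀ (j k : Fin 3) (x), pd j (pd k φ) x
      = fderiv ℝ (fderiv ℝ φ) x (Pi.single j 1) (Pi.single k 1) := by
    intro j k x
    rw [pd_eq, (hσfd k x).fderiv]
    rfl
  have hsymm : ∀ (x) (j k : Fin 3), pd j (pd k φ) x = pd k (pd j φ) x := by
    intro x j k
    rw [hσpd, hσpd]
    exact (hφ.contDiffAt.isSymmSndFDerivAt (by norm_num)) _ _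
  -- derivative of s = ∑ (pd j φ)^2
  have hsfd : ∀ x, HasFDerivAt (fun y => ∑ j, (pd j φ y) ^ 2)
      (∑ j, (2 * pd j φ x) • fderiv ℝ (pd j φ) x) x := by
    intro x
    refine HasFDerivAt.fun_sum fun j _ => ?_
    have h := ((hσd j x).hasFDerivAt).fun_mul ((hσd j x).hasFDerivAt)
    have e : (fun y => pd j φ y * pd j φ y) = fun y => (pd j φ y) ^ 2 :=
      funext fun y => (sq _).symm
    rw [e] at h
    rw [two_mul, add_smul]; exact h
  -- derivative of A = s ^ (q/2)
  have hAfd : ∀ x, HasFDerivAt (fun y => (∑ j, (pd j φ y) ^ 2) ^ (q/2))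
      ((q/2 * (∑ j, (pd j φ x) ^ 2) ^ (q/2 - 1)) •
        (∑ j, (2 * pd j φ x) • fderiv ℝ (pd j φ) x)) x := by
    intro x
    exact (Real.hasDerivAt_rpow_const (x := ∑ j, (pd j φ x) ^ 2) (p := q/2)
      (Or.inr (by linarith))).comp_hasFDerivAt x (hsfd x)
  have hApd : ∀ (k : Fin 3) (x), pd k (fun y => (∑ j, (pd j φ y) ^ 2) ^ (q/2)) x
      = q * ((∑ j, (pd j φ x) ^ 2) ^ (q/2 - 1) * ∑ j, pd j φ x * pd k (pd j φ) x) := by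
    intro k x
    rw [pd_eq, (hAfd x).fderiv]
    simp only [ContinuousLinearMap.coe_smul', Pi.smul_apply, ContinuousLinearMap.coe_sum',
      Finset.sum_apply, smul_eq_mul, Finset.mul_sum]
    refine Finset.sum_congr rfl fun j _ => ?_
    simp only [← pd_eq]
    ring
  -- continuity helpers
  have hpdc : ∀ (j : Fin 3) (f : (Fin 3 → ℝ) → ℝ), ContDiff ℝ 1 f → Continuous (pd j f) := by
    intro j f hf
    have h := ((ContinuousLinearMap.apply ℝ ℝ (Pi.single j 1)).continuous).comp
      (hf.continuous_fderiv one_ne_zero)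
    exact h
  have hA1 : ContDiff ℝ 1 (fun y => (∑ j, (pd j φ y) ^ 2) ^ (q/2)) := by
    rw [contDiff_one_iff_fderiv]
    refine ⟨fun x => (hAfd x).differentiableAt, ?_⟩
    have heq : (fderiv ℝ (fun y => (∑ j, (pd j φ y) ^ 2) ^ (q/2)))
        = fun x => (q/2 * (∑ j, (pd j φ x) ^ 2) ^ (q/2 - 1)) •
            (∑ j, (2 * pd j φ x) • fderiv ℝ (pd j φ) x) := funext fun x => (hAfd x).fderiv
    rw [heq]
    refine Continuous.fun_smul ?_ ?_
    · exact continuous_const.mul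
        (hs1.continuous.rpow_const fun x => Or.inr (by linarith))
    · exact continuous_finset_sum _ fun j _ =>
        (continuous_const.mul (hσ1 j).continuous).smul ((hσ1 j).continuous_fderiv one_ne_zero)
  have hAc : Continuous (fun y => (∑ j, (pd j φ y) ^ 2) ^ (q/2)) := hA1.continuous
  -- vanishing outside the support of u
  have hvan : ∀ x, x ∉ tsupport u → u x = 0 := fun x hx => image_eq_zero_of_notMem_tsupport hx
  have hpd0 : ∀ (j : Fin 3) (f : (Fin 3 → ℝ) → ℝ) (x), x ∉ tsupport u →
      (∀ y, y ∉ tsupport u → f y = 0) → pd j f x = 0 := by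
    intro j f x hx hf
    have hev : f =ᶠ[nhds x] (fun _ => (0:ℝ)) := by
      have hop : IsOpen (tsupport u)ᶜ := (isClosed_tsupport u).isOpen_compl
      filter_upwards [hop.mem_nhds hx] with y hy using hf y hy
    rw [pd_eq, hev.fderiv_eq, fderiv_fun_const]
    simp
  have hKint : ∀ f : (Fin 3 → ℝ) → ℝ, Continuous f → (∀ x, x ∉ tsupport u → f x = 0) →
      Integrable f (volume : Measure (Fin 3 → ℝ)) := by
    intro f hf h0
    exact hf.integrable_of_hasCompactSupport (HasCompactSupport.intro husupp h0)
  -- pointwise derivative of u·σ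
  have hUSpd : ∀ (x) (j : Fin 3), pd j (fun y => ∑ k, u y k * pd k φ y) x
      = ∑ k, (u x k * pd j (pd k φ) x + pd k φ x * pd j (fun y => u y k) x) := by
    intro x j
    rw [pd_eq, fderiv_fun_sum (fun k _ =>
      (((hud k).differentiable one_ne_zero) x).fun_mul (hσd k x))]
    rw [ContinuousLinearMap.coe_sum', Finset.sum_apply]
    refine Finset.sum_congr rfl fun k _ => ?_
    rw [fderiv_fun_mul (((hud k).differentiable one_ne_zero) x) (hσd k x)]
    simp only [ContinuousLinearMap.add_apply, ContinuousLinearMap.coe_smul', Pi.smul_apply,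
      smul_eq_mul]
    rw [← pd_eq, ← pd_eq]
  -- conversion of the sqrt-powers to rpow of s
  have hc2 : ∀ x, Real.sqrt (∑ j, (pd j φ x) ^ 2) ^ (q - 2)
      = (∑ j, (pd j φ x) ^ 2) ^ (q/2 - 1) := by
    intro x
    rw [Real.sqrt_eq_rpow, ← Real.rpow_mul (hs0 x), show (1/(2:ℝ)) * (q - 2) = q/2 - 1 by ring]
  have hAq : ∀ x, Real.sqrt (∑ j, (pd j φ x) ^ 2) ^ q = (∑ j, (pd j φ x) ^ 2) ^ (q/2) := by
    intro x
    rw [Real.sqrt_eq_rpow, ← Real.rpow_mul (hs0 x), show (1/(2:ℝ)) * q = q/2 by ring]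
  -- the main pointwise identity
  have hmain : ∀ x : Fin 3 → ℝ,
      (∑ j, pd j (fun y => ∑ k, u y k * pd k φ y) x * pd j φ x)
          * Real.sqrt (∑ j, (pd j φ x) ^ 2) ^ (q - 2)
        = (∑ j, ∑ k, pd j (fun y => u y k) x * pd k φ x * pd j φ x)
            * Real.sqrt (∑ j, (pd j φ x) ^ 2) ^ (q - 2)
          + (1/q) * ∑ k, u x k * pd k (fun y => (∑ j, (pd j φ y) ^ 2) ^ (q/2)) x := by
    intro x
    simp only [hc2 x, hUSpd x, hApd]
    exact aux_alg q ((∑ j, (pd j φ x) ^ 2) ^ (q/2 - 1)) (ne_of_gt q0)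
      (fun j k => pd j (pd k φ) x) (fun j k => pd j (fun y => u y k) x)
      (u x) (fun k => pd k φ x) (fun j => pd j φ x) (fun j k => hsymm x j k)
  -- integrability of the pieces
  have hint_f1 : Integrable (fun x => (∑ j, ∑ k, pd j (fun y => u y k) x * pd k φ x * pd j φ x)
      * Real.sqrt (∑ j, (pd j φ x) ^ 2) ^ (q - 2)) (volume : Measure (Fin 3 → ℝ)) := by
    refine hKint _ ?_ ?_
    · refine Continuous.mul ?_ ?_
      · exact continuous_finset_sum _ fun j _ => continuous_finset_sum _ fun k _ =>
          ((hpdc j _ (hud k)).mul (hσ1 k).continuous).mul (hσ1 j).continuous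
      · exact (hs1.continuous.sqrt).rpow_const fun x => Or.inr (by linarith)
    · intro x hx
      have : ∀ j k : Fin 3, pd j (fun y => u y k) x = 0 := fun j k =>
        hpd0 j _ x hx (fun y hy => by rw [show u y = 0 from hvan y hy]; rfl)
      simp [this]
  have hint_h : Integrable (fun x =>
      (1/q) * ∑ k, u x k * pd k (fun y => (∑ j, (pd j φ y) ^ 2) ^ (q/2)) x)
      (volume : Measure (Fin 3 → ℝ)) := by
    refine hKint _ ?_ ?_
    · exact continuous_const.mul (continuous_finset_sum _ fun k _ =>
        ((continuous_apply k).comp hu.continuous).mul (hpdc k _ hA1))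
    · intro x hx
      have : ∀ k : Fin 3, u x k = 0 := fun k => by rw [hvan x hx]; rfl
      simp [this]
  have hint_sumw : Integrable (fun x =>
      ∑ k, u x k * pd k (fun y => (∑ j, (pd j φ y) ^ 2) ^ (q/2)) x)
      (volume : Measure (Fin 3 → ℝ)) := by
    refine hKint _ ?_ ?_
    · exact continuous_finset_sum _ fun k _ =>
        ((continuous_apply k).comp hu.continuous).mul (hpdc k _ hA1)
    · intro x hx
      have : ∀ k : Fin 3, u x k = 0 := fun k => by rw [hvan x hx]; rfl
      simp [this]
  have hint_rhs2 : Integrable (fun x =>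
      (∑ j, (pd j φ x) ^ 2) ^ (q/2) * ∑ k, pd k (fun y => u y k) x)
      (volume : Measure (Fin 3 → ℝ)) := by
    refine hKint _ ?_ ?_
    · exact hAc.mul (continuous_finset_sum _ fun k _ => hpdc k _ (hud k))
    · intro x hx
      have : ∀ k : Fin 3, pd k (fun y => u y k) x = 0 := fun k =>
        hpd0 k _ x hx (fun y hy => by rw [show u y = 0 from hvan y hy]; rfl)
      simp [this]
  -- C¹ and compact support of the vector field A·u
  have hg1 : ∀ k : Fin 3, ContDiff ℝ 1 (fun y => (∑ j, (pd j φ y) ^ 2) ^ (q/2) * u y k) := by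
    intro k
    exact hA1.mul (hud k)
  have hgsupp : ∀ k : Fin 3,
      HasCompactSupport (fun y => (∑ j, (pd j φ y) ^ 2) ^ (q/2) * u y k) := by
    intro k
    refine HasCompactSupport.intro husupp fun x hx => ?_
    rw [show u x = 0 from hvan x hx]
    simp
  have hint_gk : ∀ k : Fin 3, Integrable
      (fun x => pd k (fun y => (∑ j, (pd j φ y) ^ 2) ^ (q/2) * u y k) x)
      (volume : Measure (Fin 3 → ℝ)) := by
    intro k
    refine hKint _ (hpdc k _ (hg1 k)) fun x hx => ?_
    refine hpd0 k _ x hx fun y hy => ?_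
    rw [show u y = 0 from hvan y hy]
    simp
  -- product rule for the components of A·u
  have hgpd : ∀ (k : Fin 3) (x), pd k (fun y => (∑ j, (pd j φ y) ^ 2) ^ (q/2) * u y k) x
      = u x k * pd k (fun y => (∑ j, (pd j φ y) ^ 2) ^ (q/2)) x
        + (∑ j, (pd j φ x) ^ 2) ^ (q/2) * pd k (fun y => u y k) x := by
    intro k x
    rw [pd_eq, fderiv_fun_mul ((hA1.differentiable one_ne_zero) x) (((hud k).differentiable one_ne_zero) x)]
    simp only [ContinuousLinearMap.add_apply, ContinuousLinearMap.coe_smul', Pi.smul_apply,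
      smul_eq_mul]
    rw [← pd_eq, ← pd_eq]
    ring
  -- divergence theorem: the integral of div (A·u) vanishes
  have hzero : (∫ x : Fin 3 → ℝ,
      ((∑ k, u x k * pd k (fun y => (∑ j, (pd j φ y) ^ 2) ^ (q/2)) x)
        + (∑ j, (pd j φ x) ^ 2) ^ (q/2) * ∑ k, pd k (fun y => u y k) x)) = 0 := by
    have e : ∀ x : Fin 3 → ℝ,
        ((∑ k, u x k * pd k (fun y => (∑ j, (pd j φ y) ^ 2) ^ (q/2)) x)
          + (∑ j, (pd j φ x) ^ 2) ^ (q/2) * ∑ k, pd k (fun y => u y k) x)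
        = ∑ k, pd k (fun y => (∑ j, (pd j φ y) ^ 2) ^ (q/2) * u y k) x := by
      intro x
      simp only [hgpd]
      rw [Finset.sum_add_distrib, Finset.mul_sum]
    rw [integral_congr_ae (Filter.Eventually.of_forall e)]
    rw [integral_finset_sum _ (fun k _ => hint_gk k)]
    refine Finset.sum_eq_zero fun k _ => ?_
    exact integral_fderiv_apply_eq_zero (hg1 k) (hgsupp k) (Pi.single k 1)
  have hsw : (∫ x : Fin 3 → ℝ,
        ∑ k, u x k * pd k (fun y => (∑ j, (pd j φ y) ^ 2) ^ (q/2)) x)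
      = - ∫ x : Fin 3 → ℝ, (∑ j, (pd j φ x) ^ 2) ^ (q/2) * ∑ k, pd k (fun y => u y k) x := by
    rw [integral_add hint_sumw hint_rhs2] at hzero
    linarith
  -- assemble everything
  calc (∫ x : Fin 3 → ℝ,
        (∑ j, pd j (fun y => ∑ k, u y k * pd k φ y) x * pd j φ x)
          * Real.sqrt (∑ j, (pd j φ x) ^ 2) ^ (q - 2))
      = ∫ x : Fin 3 → ℝ,
          ((∑ j, ∑ k, pd j (fun y => u y k) x * pd k φ x * pd j φ x)
            * Real.sqrt (∑ j, (pd j φ x) ^ 2) ^ (q - 2)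
          + (1/q) * ∑ k, u x k * pd k (fun y => (∑ j, (pd j φ y) ^ 2) ^ (q/2)) x) :=
        integral_congr_ae (Filter.Eventually.of_forall hmain)
    _ = (∫ x : Fin 3 → ℝ,
          (∑ j, ∑ k, pd j (fun y => u y k) x * pd k φ x * pd j φ x)
            * Real.sqrt (∑ j, (pd j φ x) ^ 2) ^ (q - 2))
        + ∫ x : Fin 3 → ℝ,
          (1/q) * ∑ k, u x k * pd k (fun y => (∑ j, (pd j φ y) ^ 2) ^ (q/2)) x :=
        integral_add hint_f1 hint_h
    _ = (∫ x : Fin 3 → ℝ,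
          (∑ j, ∑ k, pd j (fun y => u y k) x * pd k φ x * pd j φ x)
            * Real.sqrt (∑ j, (pd j φ x) ^ 2) ^ (q - 2))
        - (1 / q) * ∫ x : Fin 3 → ℝ,
            Real.sqrt (∑ j, (pd j φ x) ^ 2) ^ q * (∑ j, pd j (fun y => u y j) x) := by
        rw [integral_const_mul, hsw]
        have : (∫ x : Fin 3 → ℝ,
            Real.sqrt (∑ j, (pd j φ x) ^ 2) ^ q * (∑ j, pd j (fun y => u y j) x))
          = ∫ x : Fin 3 → ℝ, (∑ j, (pd j φ x) ^ 2) ^ (q/2) * ∑ k, pd k (fun y => u y k) x :=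
          integral_congr_ae (Filter.Eventually.of_forall fun x => by simp only [hAq])
        rw [this]
        ring
end
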